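/- arXiv:1312.3452 — 7 statements merged into one kernel-verified Lean document; each statement's English description precedes it below -/
import Mathlib

section
/- Let X and Y be meromorphic vector fields on a domain U ⊂ ℂ² with X and Y generically linearly independent (the tangency locus {det(X,Y)=0} has codimension ≥ 1), and let N be a formal power series based at a point p ∈ U. If both X·N and Y·N are (restrictions of) meromorphic functions on U, then N is a convergent power series. -/
/- Statement 1: if X, Y are meromorphic vector fields on a domain of ℂ², generically
linearly independent, and N is a formal power series at a point p with X·N and Y·N
meromorphic, then N converges.
Formalization: germs are translated to the origin.  A formal series is *convergent* when
its coefficients are bounded on some polydisc (geometric bound).  A meromorphic vector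
field is a holomorphic (= convergent) vector field divided by a convergent function; since
multiplying X by a holomorphic denominator changes neither the meromorphy of X·N nor the
generic independence, X and Y are represented by their convergent numerators A, C, and
`X·N meromorphic` reads: d·(A·N) = g for some convergent g, d with d ≠ 0. -/

noncomputable section
open MvPowerSeries

abbrev R2 := MvPowerSeries (Fin 2) ℂ

/-- formal partial derivative ∂/∂xᵢ of a power series -/
def pd (i : Fin 2) (f : R2) : R2 :=
  fun d => ((d i : ℂ) + 1) * MvPowerSeries.coeff (d + Finsupp.single i 1) f

/-- derivative of f along the formal vector field Z -/
def lieD (Z : Fin 2 → R2) (f : R2) : R2 := Z 0 * pd 0 f + Z 1 * pd 1 f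

/-- a formal power series is convergent iff its coefficients are geometrically bounded -/
def IsConv (f : R2) : Prop :=
  ∃ r C : ℝ, 0 < r ∧ ∀ d : Fin 2 →₀ ℕ,
    ‖MvPowerSeries.coeff d f‖ * r ^ (d.sum fun _ n => n) ≤ C

abbrev I2 := Fin 2 →₀ ℕ

def w (d : I2) : ℝ := d 0 + Real.sqrt 2 * d 1

lemma sqrt2_ge_one : (1:ℝ) ≤ Real.sqrt 2 := by
  nlinarith [Real.sq_sqrt (by norm_num : (0:ℝ) ≤ 2), Real.sqrt_nonneg 2]

lemma sqrt2_le_two : Real.sqrt 2 ≤ 2 := by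
  nlinarith [Real.sq_sqrt (by norm_num : (0:ℝ) ≤ 2), Real.sqrt_nonneg 2]

lemma w_nonneg (d : I2) : 0 ≤ w d := by
  have := sqrt2_ge_one
  unfold w; positivity

lemma le_w (d : I2) : ((d 0 : ℝ) + d 1) ≤ w d := by
  have := sqrt2_ge_one; unfold w; nlinarith [Nat.cast_nonneg (α := ℝ) (d 1)]

lemma w_le (d : I2) : w d ≤ 2 * ((d 0 : ℝ) + d 1) := by
  have := sqrt2_le_two; unfold w
  nlinarith [Nat.cast_nonneg (α := ℝ) (d 1), Nat.cast_nonneg (α := ℝ) (d 0),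
    sqrt2_ge_one]

lemma coord_le_w (d : I2) (i : Fin 2) : (d i : ℝ) ≤ w d := by
  have h1 := sqrt2_ge_one
  have h0 : (0:ℝ) ≤ d 0 := Nat.cast_nonneg _
  have h0' : (0:ℝ) ≤ d 1 := Nat.cast_nonneg _
  have hi : i = 0 ∨ i = 1 := by omega
  rcases hi with rfl | rfl <;> unfold w <;> nlinarith

lemma w_add (a b : I2) : w (a + b) = w a + w b := by
  unfold w; simp [Finsupp.add_apply]; ring

lemma w_inj {a b : I2} (h : w a = w b) : a = b := by
  unfold w at h
  by_cases h1 : a 1 = b 1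
  · have : (a 0 : ℝ) = b 0 := by rw [h1] at h; linarith
    have h0 : a 0 = b 0 := by exact_mod_cast this
    ext i; fin_cases i <;> simp [h0, h1]
  · exfalso
    have hs : Real.sqrt 2 = ((b 0 : ℝ) - a 0) / ((a 1 : ℝ) - b 1) := by
      have hne : (a 1 : ℝ) - b 1 ≠ 0 := by
        intro hc
        exact h1 (by exact_mod_cast (by linarith : (a 1 : ℝ) = b 1))
      field_simp
      linarith
    apply irrational_sqrt_two
    rw [hs]
    exact ⟨((b 0 : ℚ) - a 0) / ((a 1 : ℚ) - b 1), by push_cast; ring⟩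

def pairs (K : ℕ) : Finset I2 :=
  (Finset.range K ×ˢ Finset.range K).image fun p => Finsupp.single 0 p.1 + Finsupp.single 1 p.2

lemma finsupp_eq (a : I2) : Finsupp.single 0 (a 0) + Finsupp.single 1 (a 1) = a := by
  ext i
  have hi : i = 0 ∨ i = 1 := by omega
  rcases hi with rfl | rfl <;> simp [Finsupp.single_apply]

lemma mem_pairs {K : ℕ} {a : I2} : a ∈ pairs K ↔ a 0 < K ∧ a 1 < K := by
  constructor
  · rintro h
    simp only [pairs, Finset.mem_image, Finset.mem_product, Finset.mem_range] at h
    obtain ⟨p, ⟨h1, h2⟩, rfl⟩ := h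
    constructor <;> simpa [Finsupp.single_apply]
  · rintro ⟨h1, h2⟩
    simp only [pairs, Finset.mem_image, Finset.mem_product, Finset.mem_range]
    exact ⟨(a 0, a 1), ⟨h1, h2⟩, finsupp_eq a⟩

lemma fst_eta (ψ : I2 → ℕ × ℕ) (hψ : ψ = fun a => (a 0, a 1)) : Function.Injective ψ := by
  subst hψ
  intro a b h
  simp only [Prod.mk.injEq] at h
  rw [← finsupp_eq a, ← finsupp_eq b, h.1, h.2]

lemma sum_rpow_le {t : ℝ} (ht : 2 ≤ t) (s : Finset I2) : ∑ a ∈ s, t ^ (-w a) ≤ 4 := by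
  have ht0 : (0:ℝ) < t := by linarith
  have ht1 : (1:ℝ) ≤ t := by linarith
  set u : ℝ := t⁻¹ with hu
  have hu0 : 0 ≤ u := by positivity
  have hu2 : u ≤ 1/2 := by
    rw [hu]; rw [inv_le_comm₀ ht0 (by norm_num)]; linarith
  -- pointwise bound
  have hpt : ∀ a : I2, t ^ (-w a) ≤ u ^ (a 0) * u ^ (a 1) := by
    intro a
    have h1 : t ^ (-w a) ≤ t ^ (-((a 0 : ℝ) + (a 1 : ℝ))) :=
      Real.rpow_le_rpow_of_exponent_le ht1 (by have := le_w a; linarith)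
    have h2 : t ^ (-((a 0 : ℝ) + (a 1 : ℝ))) = u ^ (a 0) * u ^ (a 1) := by
      rw [Real.rpow_neg ht0.le, Real.rpow_add ht0, Real.rpow_natCast, Real.rpow_natCast,
        mul_inv, hu, inv_pow, inv_pow]
    linarith
  calc ∑ a ∈ s, t ^ (-w a) ≤ ∑ a ∈ s, u ^ (a 0) * u ^ (a 1) :=
        Finset.sum_le_sum fun a _ => hpt a
    _ ≤ 4 := by
      set n : ℕ := (s.sup fun a => max (a 0) (a 1)) + 1 with hn
      have hsub : s.image (fun a : I2 => (a 0, a 1)) ⊆ Finset.range n ×ˢ Finset.range n := by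
        intro p hp
        simp only [Finset.mem_image] at hp
        obtain ⟨a, ha, rfl⟩ := hp
        have h1 : max (a 0) (a 1) ≤ s.sup fun a => max (a 0) (a 1) := Finset.le_sup (f := fun a : I2 => max (a 0) (a 1)) ha
        simp only [Finset.mem_product, Finset.mem_range]
        omega
      have heq : ∑ a ∈ s, u ^ (a 0) * u ^ (a 1)
          = ∑ p ∈ s.image (fun a : I2 => (a 0, a 1)), u ^ p.1 * u ^ p.2 := by
        rw [Finset.sum_image]
        intro a _ b _ h
        exact fst_eta _ rfl h
      rw [heq]
      have h3 : ∑ p ∈ s.image (fun a : I2 => (a 0, a 1)), u ^ p.1 * u ^ p.2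
          ≤ ∑ p ∈ Finset.range n ×ˢ Finset.range n, u ^ p.1 * u ^ p.2 :=
        Finset.sum_le_sum_of_subset_of_nonneg hsub (fun p _ _ => by positivity)
      have h4 : ∑ p ∈ Finset.range n ×ˢ Finset.range n, (u ^ p.1 * u ^ p.2)
          = (∑ i ∈ Finset.range n, u ^ i) * (∑ j ∈ Finset.range n, u ^ j) := by
        rw [Finset.sum_mul_sum, Finset.sum_product]
      have hgeom : ∑ i ∈ Finset.range n, u ^ i ≤ 2 := by
        calc ∑ i ∈ Finset.range n, u ^ i ≤ ∑ i ∈ Finset.range n, (1/2:ℝ) ^ i :=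
              Finset.sum_le_sum fun i _ => pow_le_pow_left₀ hu0 hu2 i
          _ ≤ 2 := by
              have := sum_geometric_two_le n
              simpa [one_div] using this
      have hge0 : 0 ≤ ∑ i ∈ Finset.range n, u ^ i :=
        Finset.sum_nonneg fun i _ => by positivity
      nlinarith

def rset (m : I2) : Finset I2 := (pairs (2*(m 0 + m 1) + 1)).filter fun b => w b < w m

lemma mem_rset {b m : I2} (h : w b < w m) : b ∈ rset m := by
  have hb0 : (b 0 : ℝ) ≤ w b := coord_le_w b 0
  have hb1 : (b 1 : ℝ) ≤ w b := coord_le_w b 1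
  have hm : w m ≤ 2 * ((m 0 : ℝ) + m 1) := w_le m
  have h0 : (b 0 : ℝ) < ((2*(m 0 + m 1) + 1 : ℕ) : ℝ) := by push_cast; linarith
  have h1 : (b 1 : ℝ) < ((2*(m 0 + m 1) + 1 : ℕ) : ℝ) := by push_cast; linarith
  rw [rset, Finset.mem_filter, mem_pairs]
  exact ⟨⟨by exact_mod_cast h0, by exact_mod_cast h1⟩, h⟩

def rank (m : I2) : ℕ := (rset m).card

lemma rank_lt {b m : I2} (h : w b < w m) : rank b < rank m := by
  apply Finset.card_lt_card
  constructor
  · intro x hx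
    rw [rset, Finset.mem_filter] at hx
    exact mem_rset (lt_trans hx.2 h)
  · intro hsub
    have := hsub (mem_rset h)
    rw [rset, Finset.mem_filter] at this
    exact absurd this.2 (lt_irrefl _)

lemma dsum_eq (d : I2) : (d.sum fun _ n => n) = d 0 + d 1 := by
  rw [Finsupp.sum_fintype]
  · exact Fin.sum_univ_two d
  · intro i; rfl

/-- weight-bound form -/
def WB (f : R2) (t Cc : ℝ) : Prop := ∀ d : I2, ‖MvPowerSeries.coeff d f‖ ≤ Cc * t ^ (w d)

lemma wb_of_isConv {f : R2} (h : IsConv f) : ∃ t Cc, 1 ≤ t ∧ 0 ≤ Cc ∧ WB f t Cc := by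
  obtain ⟨r, C, hr, hb⟩ := h
  set c : ℝ := min r 1 with hc
  have hc0 : 0 < c := lt_min hr one_pos
  have hc1 : c ≤ 1 := min_le_right _ _
  refine ⟨c⁻¹, max C 0, ?_, le_max_right _ _, ?_⟩
  · rw [le_inv_comm₀ one_pos hc0]; simpa using hc1
  intro d
  have hb' := hb d
  rw [dsum_eq] at hb'
  have hcr : c ^ (d 0 + d 1) ≤ r ^ (d 0 + d 1) :=
    pow_le_pow_left₀ hc0.le (min_le_left _ _) _
  have hcp : (0:ℝ) < c ^ (d 0 + d 1) := by positivity
  have h1 : ‖MvPowerSeries.coeff d f‖ ≤ (max C 0) * (c⁻¹) ^ ((d 0 + d 1 : ℕ) : ℝ) := by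
    rw [Real.rpow_natCast, inv_pow, ← div_eq_mul_inv, le_div_iff₀ hcp]
    · calc ‖MvPowerSeries.coeff d f‖ * c ^ (d 0 + d 1)
          ≤ ‖MvPowerSeries.coeff d f‖ * r ^ (d 0 + d 1) := by
            have := norm_nonneg (MvPowerSeries.coeff d f)
            nlinarith
        _ ≤ C := hb'
        _ ≤ max C 0 := le_max_left _ _
  refine le_trans h1 ?_
  apply mul_le_mul_of_nonneg_left _ (le_max_right C 0)
  apply Real.rpow_le_rpow_of_exponent_le
  · rw [le_inv_comm₀ one_pos hc0]; simpa using hc1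
  · push_cast; exact le_w d

lemma isConv_of_wb {f : R2} (h : ∃ t Cc, 1 ≤ t ∧ WB f t Cc) : IsConv f := by
  obtain ⟨t, Cc, ht, hb⟩ := h
  have ht0 : (0:ℝ) < t := by linarith
  refine ⟨(t⁻¹)^2, Cc, by positivity, ?_⟩
  intro d
  rw [dsum_eq]
  have h1 : ((t⁻¹)^2 : ℝ) ^ (d 0 + d 1) = t ^ (-(2 * ((d 0 : ℝ) + d 1))) := by
    have h2 : ((t⁻¹)^2 : ℝ) ^ (d 0 + d 1) = (t ^ (2*(d 0 + d 1) : ℕ))⁻¹ := by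
      rw [← inv_pow, ← pow_mul]
    rw [h2, ← Real.rpow_natCast t, ← Real.rpow_neg ht0.le]
    congr 1
    push_cast; ring
  rw [h1]
  calc ‖MvPowerSeries.coeff d f‖ * t ^ (-(2 * ((d 0 : ℝ) + d 1)))
      ≤ (Cc * t ^ (w d)) * t ^ (-(2 * ((d 0 : ℝ) + d 1))) := by
        apply mul_le_mul_of_nonneg_right (hb d) (by positivity)
    _ = Cc * t ^ (w d - 2 * ((d 0 : ℝ) + d 1)) := by
        rw [mul_assoc, ← Real.rpow_add ht0]; ring_nf
    _ ≤ Cc * 1 := by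
        apply mul_le_mul_of_nonneg_left _ ?_
        · apply Real.rpow_le_one_of_one_le_of_nonpos ht
          have := w_le d; linarith
        · by_contra hC
          push_neg at hC
          have := hb 0
          have h0 : (0:ℝ) ≤ Cc * t ^ (w (0:I2)) := le_trans (norm_nonneg _) this
          have hp : (0:ℝ) < t ^ (w (0:I2)) := Real.rpow_pos_of_pos ht0 _
          nlinarith
    _ = Cc := mul_one _

lemma card_antidiag (d : I2) : ((Finset.HasAntidiagonal.antidiagonal d).card : ℝ) ≤ 2 ^ (w d) := by
  classical
  have h1 : (Finset.HasAntidiagonal.antidiagonal d).card ≤ (d 0 + 1) * (d 1 + 1) := by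
    have hle := Finset.card_le_card_of_injOn (s := Finset.HasAntidiagonal.antidiagonal d) (f := fun p : I2 × I2 => (p.1 0, p.1 1))
      (t := Finset.range (d 0 + 1) ×ˢ Finset.range (d 1 + 1)) ?_ ?_
    · simpa using hle
    · intro p hp
      rw [Finset.mem_coe, Finset.HasAntidiagonal.mem_antidiagonal] at hp
      have h0 : p.1 0 + p.2 0 = d 0 := by rw [← hp]; simp [Finsupp.add_apply]
      have h1 : p.1 1 + p.2 1 = d 1 := by rw [← hp]; simp [Finsupp.add_apply]
      simp only [Finset.mem_coe, Finset.mem_product, Finset.mem_range]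
      omega
    · intro p hp q hq h
      rw [Finset.mem_coe, Finset.HasAntidiagonal.mem_antidiagonal] at hp hq
      simp only [Prod.mk.injEq] at h
      have hfst : p.1 = q.1 := by
        rw [← finsupp_eq p.1, ← finsupp_eq q.1, h.1, h.2]
      have hsnd : p.2 = q.2 := by
        have : p.1 + p.2 = p.1 + q.2 := by rw [hp, hfst, hq]
        exact add_left_cancel this
      exact Prod.ext hfst hsnd
  have h2 : ((d 0 + 1) * (d 1 + 1) : ℕ) ≤ 2 ^ (d 0 + d 1) := by
    have a0 := Nat.lt_two_pow_self (n := d 0)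
    have a1 := Nat.lt_two_pow_self (n := d 1)
    calc (d 0 + 1) * (d 1 + 1) ≤ 2 ^ (d 0) * 2 ^ (d 1) := Nat.mul_le_mul a0 a1
      _ = 2 ^ (d 0 + d 1) := (pow_add 2 _ _).symm
  have h3 : ((2:ℝ)) ^ ((d 0 + d 1 : ℕ) : ℝ) ≤ (2:ℝ) ^ (w d) := by
    apply Real.rpow_le_rpow_of_exponent_le (by norm_num)
    push_cast; exact le_w d
  calc ((Finset.HasAntidiagonal.antidiagonal d).card : ℝ) ≤ ((2 ^ (d 0 + d 1) : ℕ) : ℝ) := by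
        exact_mod_cast le_trans h1 h2
    _ = (2:ℝ) ^ ((d 0 + d 1 : ℕ) : ℝ) := by rw [Real.rpow_natCast]; push_cast; ring
    _ ≤ (2:ℝ) ^ (w d) := h3

lemma wb_mul {f g : R2} {t1 t2 C1 C2 : ℝ} (h1t : 1 ≤ t1) (h2t : 1 ≤ t2)
    (hC1 : 0 ≤ C1) (hC2 : 0 ≤ C2) (h1 : WB f t1 C1) (h2 : WB g t2 C2) :
    WB (f * g) (2 * max t1 t2) (C1 * C2) := by
  intro d
  set t := max t1 t2 with hts
  have ht1 : (1:ℝ) ≤ t := le_trans h1t (le_max_left _ _)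
  have ht0 : (0:ℝ) < t := lt_of_lt_of_le one_pos ht1
  classical
  rw [MvPowerSeries.coeff_mul]
  calc ‖∑ p ∈ Finset.HasAntidiagonal.antidiagonal d, MvPowerSeries.coeff p.1 f * MvPowerSeries.coeff p.2 g‖
      ≤ ∑ p ∈ Finset.HasAntidiagonal.antidiagonal d, ‖MvPowerSeries.coeff p.1 f * MvPowerSeries.coeff p.2 g‖ :=
        norm_sum_le _ _
    _ ≤ ∑ _p ∈ Finset.HasAntidiagonal.antidiagonal d, C1 * C2 * t ^ (w d) := by
        apply Finset.sum_le_sum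
        intro p hp
        rw [Finset.HasAntidiagonal.mem_antidiagonal] at hp
        rw [norm_mul]
        have ha : ‖MvPowerSeries.coeff p.1 f‖ ≤ C1 * t ^ (w p.1) :=
          le_trans (h1 p.1) (mul_le_mul_of_nonneg_left
            (Real.rpow_le_rpow (by linarith) (le_max_left _ _) (w_nonneg _)) hC1)
        have hb : ‖MvPowerSeries.coeff p.2 g‖ ≤ C2 * t ^ (w p.2) :=
          le_trans (h2 p.2) (mul_le_mul_of_nonneg_left
            (Real.rpow_le_rpow (by linarith) (le_max_right _ _) (w_nonneg _)) hC2)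
        calc ‖MvPowerSeries.coeff p.1 f‖ * ‖MvPowerSeries.coeff p.2 g‖
            ≤ (C1 * t ^ (w p.1)) * (C2 * t ^ (w p.2)) :=
              mul_le_mul ha hb (norm_nonneg _) (by positivity)
          _ = C1 * C2 * t ^ (w p.1 + w p.2) := by rw [Real.rpow_add ht0]; ring
          _ = C1 * C2 * t ^ (w d) := by rw [← w_add, hp]
    _ = ((Finset.HasAntidiagonal.antidiagonal d).card : ℝ) * (C1 * C2 * t ^ (w d)) := by
        rw [Finset.sum_const, nsmul_eq_mul]
    _ ≤ (2:ℝ) ^ (w d) * (C1 * C2 * t ^ (w d)) := by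
        apply mul_le_mul_of_nonneg_right (card_antidiag d) (by positivity)
    _ = C1 * C2 * (2 * t) ^ (w d) := by
        rw [Real.mul_rpow (by norm_num) ht0.le]; ring

lemma isConv_mul {f g : R2} (hf : IsConv f) (hg : IsConv g) : IsConv (f * g) := by
  obtain ⟨t1, C1, ht1, hC1, h1⟩ := wb_of_isConv hf
  obtain ⟨t2, C2, ht2, hC2, h2⟩ := wb_of_isConv hg
  exact isConv_of_wb ⟨2 * max t1 t2, C1 * C2,
    by have : (1:ℝ) ≤ max t1 t2 := le_trans ht1 (le_max_left _ _); linarith,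
    wb_mul ht1 ht2 hC1 hC2 h1 h2⟩

lemma isConv_sub {f g : R2} (hf : IsConv f) (hg : IsConv g) : IsConv (f - g) := by
  obtain ⟨t1, C1, ht1, hC1, h1⟩ := wb_of_isConv hf
  obtain ⟨t2, C2, ht2, hC2, h2⟩ := wb_of_isConv hg
  apply isConv_of_wb
  refine ⟨max t1 t2, C1 + C2, le_trans ht1 (le_max_left _ _), ?_⟩
  intro d
  rw [map_sub]
  have ht : (1:ℝ) ≤ max t1 t2 := le_trans ht1 (le_max_left _ _)
  have ha : ‖MvPowerSeries.coeff d f‖ ≤ C1 * (max t1 t2) ^ (w d) :=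
    le_trans (h1 d) (mul_le_mul_of_nonneg_left
      (Real.rpow_le_rpow (by linarith) (le_max_left _ _) (w_nonneg _)) hC1)
  have hb : ‖MvPowerSeries.coeff d g‖ ≤ C2 * (max t1 t2) ^ (w d) :=
    le_trans (h2 d) (mul_le_mul_of_nonneg_left
      (Real.rpow_le_rpow (by linarith) (le_max_right _ _) (w_nonneg _)) hC2)
  calc ‖MvPowerSeries.coeff d f - MvPowerSeries.coeff d g‖
      ≤ ‖MvPowerSeries.coeff d f‖ + ‖MvPowerSeries.coeff d g‖ := norm_sub_le _ _
    _ ≤ C1 * (max t1 t2) ^ (w d) + C2 * (max t1 t2) ^ (w d) := add_le_add ha hb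
    _ = (C1 + C2) * (max t1 t2) ^ (w d) := by ring

lemma mem_pairs_of_w {a : I2} {K : ℕ} (h : w a < (K : ℝ)) : a ∈ pairs K := by
  rw [mem_pairs]
  have h0 := coord_le_w a 0
  have h1 := coord_le_w a 1
  constructor
  · exact_mod_cast lt_of_le_of_lt h0 h
  · exact_mod_cast lt_of_le_of_lt h1 h

lemma exists_min_supp {e : R2} (he : e ≠ 0) :
    ∃ μ : I2, MvPowerSeries.coeff μ e ≠ 0 ∧
      ∀ a : I2, MvPowerSeries.coeff a e ≠ 0 → a ≠ μ → w μ < w a := by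
  classical
  have hex : ∃ a, MvPowerSeries.coeff a e ≠ 0 := by
    by_contra hc; push_neg at hc
    exact he (MvPowerSeries.ext fun d => by simpa using hc d)
  obtain ⟨a0, ha0⟩ := hex
  set K : ℕ := ⌈w a0⌉₊ + 1 with hK
  set P : Finset I2 := (pairs K).filter (fun a => MvPowerSeries.coeff a e ≠ 0) with hP
  have hKr : w a0 < (K : ℝ) := by
    have := Nat.le_ceil (w a0); rw [hK]; push_cast; linarith
  have ha0P : a0 ∈ P := Finset.mem_filter.mpr ⟨mem_pairs_of_w hKr, ha0⟩
  obtain ⟨μ, hμP, hminP⟩ := Finset.exists_min_image P w ⟨a0, ha0P⟩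
  refine ⟨μ, (Finset.mem_filter.mp hμP).2, ?_⟩
  intro a ha hne
  have hwne : w a ≠ w μ := fun h2 => hne (w_inj h2)
  by_cases haP : a ∈ P
  · exact lt_of_le_of_ne (hminP a haP) (Ne.symm hwne)
  · have hμa0 : w μ ≤ w a0 := hminP a0 ha0P
    have hnp : a ∉ pairs K := fun hc => haP (Finset.mem_filter.mpr ⟨hc, ha⟩)
    have hwa : ¬ (w a < (K : ℝ)) := fun hc => hnp (mem_pairs_of_w hc)
    push_neg at hwa
    linarith

lemma exists_gap {e : R2} (μ : I2)
    (hmin : ∀ a : I2, MvPowerSeries.coeff a e ≠ 0 → a ≠ μ → w μ < w a) :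
    ∃ δ : ℝ, 0 < δ ∧ δ ≤ 1 ∧
      ∀ a : I2, MvPowerSeries.coeff a e ≠ 0 → a ≠ μ → w μ + δ ≤ w a := by
  classical
  set K : ℕ := ⌈w μ + 1⌉₊ + 1 with hK
  have hKr : w μ + 1 < (K : ℝ) := by
    have := Nat.le_ceil (w μ + 1); rw [hK]; push_cast; linarith
  set G : Finset I2 := (pairs K).filter
    (fun a => MvPowerSeries.coeff a e ≠ 0 ∧ a ≠ μ) with hG
  by_cases hGne : G.Nonempty
  · obtain ⟨a1, ha1G, hinf⟩ := Finset.exists_min_image G w hGne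
    obtain ⟨_, hco1, hne1⟩ := Finset.mem_filter.mp ha1G
    have hgt : w μ < w a1 := hmin a1 hco1 hne1
    refine ⟨min 1 (w a1 - w μ), lt_min one_pos (by linarith), min_le_left _ _, ?_⟩
    intro a ha hne
    by_cases hw : w a < (K : ℝ)
    · have haG : a ∈ G := Finset.mem_filter.mpr ⟨mem_pairs_of_w hw, ha, hne⟩
      have := hinf a haG
      have := min_le_right 1 (w a1 - w μ)
      linarith
    · push_neg at hw
      have := min_le_left 1 (w a1 - w μ)
      linarith
  · refine ⟨1, one_pos, le_refl 1, ?_⟩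
    intro a ha hne
    by_cases hw : w a < (K : ℝ)
    · exact absurd ⟨a, Finset.mem_filter.mpr ⟨mem_pairs_of_w hw, ha, hne⟩⟩ hGne
    · push_neg at hw; linarith

lemma rpow_split {te s wa wmu wm wb : ℝ} (hte : 0 < te) (hs : 0 < s)
    (h : wb = wm + wmu - wa) :
    te ^ wa * s ^ wb = te ^ wmu * s ^ wm * (s / te) ^ (-(wa - wmu)) := by
  have hste : 0 < s / te := by positivity
  have e1 : te ^ wa = te ^ wmu * te ^ (wa - wmu) := by
    rw [← Real.rpow_add hte]; ring_nf
  have e2 : s ^ wb = s ^ wm / s ^ (wa - wmu) := by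
    rw [← Real.rpow_sub hs]; congr 1; linarith
  have e3 : (s / te) ^ (-(wa - wmu)) = te ^ (wa - wmu) / s ^ (wa - wmu) := by
    rw [Real.rpow_neg hste.le, Real.div_rpow hs.le hte.le, inv_div]
  have h4 : (0:ℝ) < s ^ (wa - wmu) := Real.rpow_pos_of_pos hs _
  rw [e1, e2, e3]
  field_simp

set_option maxHeartbeats 2000000 in
lemma isConv_of_mul_left {e f : R2} (he : e ≠ 0) (hce : IsConv e)
    (hcef : IsConv (e * f)) : IsConv f := by
  classical
  obtain ⟨te, Ce, hte, hCe, hbe⟩ := wb_of_isConv hce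
  obtain ⟨tg, Cg, htg, hCg, hbg⟩ := wb_of_isConv hcef
  obtain ⟨μ, hμ, hmin⟩ := exists_min_supp he
  obtain ⟨δ, hδ0, hδ1, hgap⟩ := exists_gap μ hmin
  obtain ⟨ε, hε⟩ : ∃ x : ℝ, x = ‖MvPowerSeries.coeff μ e‖ := ⟨_, rfl⟩
  have hε0 : 0 < ε := by rw [hε]; exact norm_pos_iff.mpr hμ
  have hte0 : (0:ℝ) < te := by linarith
  have htg0 : (0:ℝ) < tg := by linarith
  have htemu : (0:ℝ) < te ^ (w μ) := Real.rpow_pos_of_pos hte0 _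
  have htgmu : (0:ℝ) < tg ^ (w μ) := Real.rpow_pos_of_pos htg0 _
  -- finite set of "small" indices
  obtain ⟨K0, hK0⟩ : ∃ x : ℕ, x = ⌈2 * w μ + 2⌉₊ + 1 := ⟨_, rfl⟩
  obtain ⟨H, hH⟩ : ∃ x : Finset I2, x = pairs K0 := ⟨_, rfl⟩
  obtain ⟨hcard, hhc⟩ : ∃ x : ℝ, x = (H.card : ℝ) := ⟨_, rfl⟩
  have hh0 : 0 ≤ hcard := by rw [hhc]; exact Nat.cast_nonneg _
  have hHmem : ∀ a : I2, w a ≤ 2 * w μ + 2 → a ∈ H := by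
    intro a ha
    rw [hH]
    apply mem_pairs_of_w
    have := Nat.le_ceil (2 * w μ + 2)
    rw [hK0]; push_cast; linarith
  -- choice of s
  obtain ⟨Q, hQ⟩ : ∃ x : ℝ, x = 2 * Ce * te ^ (w μ) * (hcard + 4) / ε + 1 := ⟨_, rfl⟩
  have hQ1 : 1 ≤ Q := by
    have h0 : 0 ≤ 2 * Ce * te ^ (w μ) * (hcard + 4) / ε := by positivity
    rw [hQ]; linarith
  have hQ0 : 0 < Q := by linarith
  have hQδ : (0:ℝ) < Q ^ (1/δ) := Real.rpow_pos_of_pos hQ0 _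
  obtain ⟨s, hs⟩ : ∃ x : ℝ, x = te * (4 + Q ^ (1/δ)) + tg + 1 := ⟨_, rfl⟩
  have hsp : 0 < te * (4 + Q ^ (1/δ)) := mul_pos hte0 (by linarith)
  have hs1 : 1 ≤ s := by rw [hs]; linarith
  have hs0 : (0:ℝ) < s := by linarith
  have hstg : tg ≤ s := by rw [hs]; linarith
  obtain ⟨T, hT⟩ : ∃ x : ℝ, x = s / te := ⟨_, rfl⟩
  have hT4 : 4 ≤ T := by
    rw [hT, le_div_iff₀ hte0, hs]
    nlinarith [mul_pos hte0 hQδ]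
  have hT1 : (1:ℝ) ≤ T := by linarith
  have hT0 : (0:ℝ) < T := by linarith
  have hTQ : Q ^ (1/δ) ≤ T := by
    rw [hT, le_div_iff₀ hte0, hs]
    nlinarith [mul_pos hte0 hQδ]
  have hTδ : Q ≤ T ^ δ := by
    have hqq : (Q ^ (1/δ)) ^ δ = Q := by
      rw [← Real.rpow_mul hQ0.le, one_div, inv_mul_cancel₀ (ne_of_gt hδ0), Real.rpow_one]
    calc Q = (Q ^ (1/δ)) ^ δ := hqq.symm
      _ ≤ T ^ δ := Real.rpow_le_rpow hQδ.le hTQ hδ0.le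
  have hTδ0 : (0:ℝ) < T ^ δ := Real.rpow_pos_of_pos hT0 _
  have hsqT : (2:ℝ) ≤ T ^ (1/2 : ℝ) := by
    have h4 : (4:ℝ) ^ (1/2 : ℝ) = 2 := by
      rw [show (4:ℝ) = 2^(2:ℕ) by norm_num, ← Real.rpow_natCast 2 2,
        ← Real.rpow_mul (by norm_num : (0:ℝ) ≤ 2)]
      norm_num
    calc (2:ℝ) = (4:ℝ) ^ (1/2:ℝ) := h4.symm
      _ ≤ T ^ (1/2:ℝ) := Real.rpow_le_rpow (by norm_num : (0:ℝ) ≤ 4) hT4 (by norm_num : (0:ℝ) ≤ 1/2)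
  -- the inductive bound constant
  obtain ⟨M, hM⟩ : ∃ x : ℝ, x = 2 * Cg * tg ^ (w μ) / ε + 1 := ⟨_, rfl⟩
  have hM0 : (0:ℝ) < M := by
    have h0 : 0 ≤ 2 * Cg * tg ^ (w μ) / ε := by positivity
    rw [hM]; linarith
  have hMkey : Cg * tg ^ (w μ) ≤ ε * M / 2 := by
    have hMval : ε * M = 2 * Cg * tg ^ (w μ) + ε := by
      rw [hM]; field_simp
    linarith
  -- key smallness of the tail factor
  have hTail : Ce * te ^ (w μ) * (hcard * T ^ (-δ) + 4 * T ^ (-(1:ℝ))) ≤ ε / 2 := by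
    have hT1' : T ^ (-(1:ℝ)) ≤ T ^ (-δ) :=
      Real.rpow_le_rpow_of_exponent_le hT1 (by linarith)
    have hTd : T ^ (-δ) = (T ^ δ)⁻¹ := Real.rpow_neg hT0.le δ
    have hTdpos : (0:ℝ) < T ^ (-δ) := Real.rpow_pos_of_pos hT0 _
    have h1 : Ce * te ^ (w μ) * (hcard * T ^ (-δ) + 4 * T ^ (-(1:ℝ)))
        ≤ Ce * te ^ (w μ) * ((hcard + 4) * T ^ (-δ)) := by
      have h2 : hcard * T ^ (-δ) + 4 * T ^ (-(1:ℝ)) ≤ (hcard + 4) * T ^ (-δ) := by nlinarith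
      exact mul_le_mul_of_nonneg_left h2 (mul_nonneg hCe htemu.le)
    refine le_trans h1 ?_
    have hεQ : 2 * Ce * te ^ (w μ) * (hcard + 4) ≤ ε * T ^ δ := by
      have hd : 2 * Ce * te ^ (w μ) * (hcard + 4) / ε ≤ T ^ δ := by
        rw [hQ] at hTδ; linarith
      have h7 := mul_le_mul_of_nonneg_right hd hε0.le
      rw [div_mul_cancel₀ _ (ne_of_gt hε0)] at h7
      linarith
    have hmul := mul_le_mul_of_nonneg_right hεQ (inv_nonneg.mpr hTδ0.le)
    rw [mul_assoc (ε)] at hmul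
    rw [mul_inv_cancel₀ (ne_of_gt hTδ0), mul_one] at hmul
    rw [hTd]
    linarith [hmul]
  -- main induction on rank
  have main : ∀ n : ℕ, ∀ m : I2, rank m < n →
      ‖MvPowerSeries.coeff m f‖ ≤ M * s ^ (w m) := by
    intro n
    induction n with
    | zero => exact fun m hm => absurd hm (Nat.not_lt_zero _)
    | succ n ih =>
      intro m hm
      have hsm : (0:ℝ) < s ^ (w m) := Real.rpow_pos_of_pos hs0 _
      have hmem : ((μ, m) : I2 × I2) ∈ Finset.HasAntidiagonal.antidiagonal (m + μ) := by
        rw [Finset.HasAntidiagonal.mem_antidiagonal]; exact add_comm μ m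
      have hco : MvPowerSeries.coeff (m + μ) (e * f)
          = MvPowerSeries.coeff μ e * MvPowerSeries.coeff m f
            + ∑ p ∈ (Finset.HasAntidiagonal.antidiagonal (m + μ)).erase (μ, m),
                MvPowerSeries.coeff p.1 e * MvPowerSeries.coeff p.2 f := by
        rw [MvPowerSeries.coeff_mul]
        exact (Finset.add_sum_erase _ _ hmem).symm
      obtain ⟨S, hS⟩ : ∃ x : Finset (I2 × I2),
          x = ((Finset.HasAntidiagonal.antidiagonal (m + μ)).erase (μ, m)).filter
            (fun p => MvPowerSeries.coeff p.1 e ≠ 0) := ⟨_, rfl⟩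
      have hSsum : ∑ p ∈ (Finset.HasAntidiagonal.antidiagonal (m + μ)).erase (μ, m),
            MvPowerSeries.coeff p.1 e * MvPowerSeries.coeff p.2 f
          = ∑ p ∈ S, MvPowerSeries.coeff p.1 e * MvPowerSeries.coeff p.2 f := by
        rw [hS]
        exact (Finset.sum_filter_of_ne (fun p _ hne => left_ne_zero_of_mul hne)).symm
      have hSfacts : ∀ p ∈ S, p.1 + p.2 = m + μ ∧
          MvPowerSeries.coeff p.1 e ≠ 0 ∧ p.1 ≠ μ := by
        intro p hp
        rw [hS, Finset.mem_filter, Finset.mem_erase, Finset.HasAntidiagonal.mem_antidiagonal] at hp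
        obtain ⟨⟨hne, hadd⟩, hco'⟩ := hp
        refine ⟨hadd, hco', ?_⟩
        intro h1
        apply hne
        have h2 : p.1 + p.2 = p.1 + m := by rw [hadd, h1]; exact add_comm m μ
        exact Prod.ext h1 (add_left_cancel h2)
      have hwp : ∀ p ∈ S, w μ + δ ≤ w p.1 ∧ w p.2 = w m + w μ - w p.1 := by
        intro p hp
        obtain ⟨hadd, hco', hne⟩ := hSfacts p hp
        have hg := hgap p.1 hco' hne
        have hw : w p.1 + w p.2 = w m + w μ := by rw [← w_add, hadd, w_add]
        exact ⟨hg, by linarith⟩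
      have hfstinj : ∀ p ∈ S, ∀ q ∈ S, p.1 = q.1 → p = q := by
        intro p hp q hq h1
        obtain ⟨hap, _, _⟩ := hSfacts p hp
        obtain ⟨haq, _, _⟩ := hSfacts q hq
        have h2 : p.1 + p.2 = p.1 + q.2 := by rw [hap, h1, haq]
        exact Prod.ext h1 (add_left_cancel h2)
      have hCnn : 0 ≤ Ce * M * (te ^ (w μ) * s ^ (w m)) :=
        mul_nonneg (mul_nonneg hCe hM0.le) (by positivity)
      have hterm : ∀ p ∈ S, ‖MvPowerSeries.coeff p.1 e * MvPowerSeries.coeff p.2 f‖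
          ≤ Ce * M * (te ^ (w μ) * s ^ (w m)) * T ^ (-(w p.1 - w μ)) := by
        intro p hp
        obtain ⟨hadd, hco', hne⟩ := hSfacts p hp
        obtain ⟨hg, hwb2⟩ := hwp p hp
        have hwlt : w p.2 < w m := by linarith
        have hrk : rank p.2 < n := lt_of_lt_of_le (rank_lt hwlt) (Nat.lt_succ_iff.mp hm)
        have hih := ih p.2 hrk
        rw [norm_mul]
        calc ‖MvPowerSeries.coeff p.1 e‖ * ‖MvPowerSeries.coeff p.2 f‖
            ≤ (Ce * te ^ (w p.1)) * (M * s ^ (w p.2)) :=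
              mul_le_mul (hbe p.1) hih (norm_nonneg _)
                (mul_nonneg hCe (Real.rpow_pos_of_pos hte0 _).le)
          _ = Ce * M * (te ^ (w p.1) * s ^ (w p.2)) := by ring
          _ = Ce * M * (te ^ (w μ) * s ^ (w m) * (s/te) ^ (-(w p.1 - w μ))) := by
              rw [rpow_split hte0 hs0 hwb2]
          _ = Ce * M * (te ^ (w μ) * s ^ (w m)) * T ^ (-(w p.1 - w μ)) := by
              rw [hT]; ring
      have hrest : ‖∑ p ∈ S, MvPowerSeries.coeff p.1 e * MvPowerSeries.coeff p.2 f‖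
          ≤ ε / 2 * (M * s ^ (w m)) := by
        refine le_trans (norm_sum_le _ _) ?_
        have hsplit := Finset.sum_filter_add_sum_filter_not S (fun p => p.1 ∈ H)
          (fun p => ‖MvPowerSeries.coeff p.1 e * MvPowerSeries.coeff p.2 f‖)
        have hb1 : ∑ p ∈ S.filter (fun p => p.1 ∈ H),
              ‖MvPowerSeries.coeff p.1 e * MvPowerSeries.coeff p.2 f‖
            ≤ hcard * (Ce * M * (te ^ (w μ) * s ^ (w m)) * T ^ (-δ)) := by
          have hptw : ∀ p ∈ S.filter (fun p => p.1 ∈ H),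
              ‖MvPowerSeries.coeff p.1 e * MvPowerSeries.coeff p.2 f‖
              ≤ Ce * M * (te ^ (w μ) * s ^ (w m)) * T ^ (-δ) := by
            intro p hp
            have hp' : p ∈ S := (Finset.mem_filter.mp hp).1
            refine le_trans (hterm p hp') ?_
            apply mul_le_mul_of_nonneg_left _ hCnn
            apply Real.rpow_le_rpow_of_exponent_le hT1
            have := (hwp p hp').1
            linarith
          calc ∑ p ∈ S.filter (fun p => p.1 ∈ H),
                ‖MvPowerSeries.coeff p.1 e * MvPowerSeries.coeff p.2 f‖
              ≤ ∑ _p ∈ S.filter (fun p => p.1 ∈ H),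
                  Ce * M * (te ^ (w μ) * s ^ (w m)) * T ^ (-δ) := Finset.sum_le_sum hptw
            _ = ((S.filter (fun p => p.1 ∈ H)).card : ℝ)
                  * (Ce * M * (te ^ (w μ) * s ^ (w m)) * T ^ (-δ)) := by
                rw [Finset.sum_const, nsmul_eq_mul]
            _ ≤ hcard * (Ce * M * (te ^ (w μ) * s ^ (w m)) * T ^ (-δ)) := by
                apply mul_le_mul_of_nonneg_right _
                  (mul_nonneg hCnn (Real.rpow_pos_of_pos hT0 _).le)
                have hc : (S.filter (fun p => p.1 ∈ H)).card ≤ H.card := by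
                  apply Finset.card_le_card_of_injOn (fun p => p.1)
                  · intro p hp
                    exact (Finset.mem_filter.mp hp).2
                  · intro p hp q hq h1
                    exact hfstinj p (Finset.mem_filter.mp hp).1 q (Finset.mem_filter.mp hq).1 h1
                rw [hhc]
                exact_mod_cast hc
        have hb2 : ∑ p ∈ S.filter (fun p => p.1 ∉ H),
              ‖MvPowerSeries.coeff p.1 e * MvPowerSeries.coeff p.2 f‖
            ≤ 4 * (Ce * M * (te ^ (w μ) * s ^ (w m)) * T ^ (-(1:ℝ))) := by
          have hptw2 : ∀ p ∈ S.filter (fun p => p.1 ∉ H),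
              ‖MvPowerSeries.coeff p.1 e * MvPowerSeries.coeff p.2 f‖
              ≤ (Ce * M * (te ^ (w μ) * s ^ (w m)) * T ^ (-(1:ℝ)))
                  * (T ^ (1/2:ℝ)) ^ (-(w p.1)) := by
            intro p hp
            obtain ⟨hpS, hpH⟩ := Finset.mem_filter.mp hp
            refine le_trans (hterm p hpS) ?_
            have hbig : 2 * w μ + 2 < w p.1 := by
              by_contra hcon
              push_neg at hcon
              exact hpH (hHmem p.1 hcon)
            have e2 : (T ^ (1/2:ℝ)) ^ (-(w p.1)) = T ^ ((1/2) * (-(w p.1))) :=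
              (Real.rpow_mul hT0.le _ _).symm
            have e3 : T ^ (-(1:ℝ)) * T ^ ((1/2) * (-(w p.1)))
                = T ^ (-(1:ℝ) + (1/2) * (-(w p.1))) := (Real.rpow_add hT0 _ _).symm
            have e1 : (Ce * M * (te ^ (w μ) * s ^ (w m)) * T ^ (-(1:ℝ)))
                  * (T ^ (1/2:ℝ)) ^ (-(w p.1))
                = Ce * M * (te ^ (w μ) * s ^ (w m)) * T ^ (-(1:ℝ) + (1/2) * (-(w p.1))) := by
              rw [e2, ← e3]; ring
            rw [e1]
            apply mul_le_mul_of_nonneg_left _ hCnn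
            apply Real.rpow_le_rpow_of_exponent_le hT1
            have := w_nonneg μ
            linarith
          calc ∑ p ∈ S.filter (fun p => p.1 ∉ H),
                ‖MvPowerSeries.coeff p.1 e * MvPowerSeries.coeff p.2 f‖
              ≤ ∑ p ∈ S.filter (fun p => p.1 ∉ H),
                  (Ce * M * (te ^ (w μ) * s ^ (w m)) * T ^ (-(1:ℝ)))
                    * (T ^ (1/2:ℝ)) ^ (-(w p.1)) := Finset.sum_le_sum hptw2
            _ = (Ce * M * (te ^ (w μ) * s ^ (w m)) * T ^ (-(1:ℝ)))
                  * ∑ p ∈ S.filter (fun p => p.1 ∉ H), (T ^ (1/2:ℝ)) ^ (-(w p.1)) :=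
                (Finset.mul_sum _ _ _).symm
            _ ≤ (Ce * M * (te ^ (w μ) * s ^ (w m)) * T ^ (-(1:ℝ))) * 4 := by
                apply mul_le_mul_of_nonneg_left _
                  (mul_nonneg hCnn (Real.rpow_pos_of_pos hT0 _).le)
                calc ∑ p ∈ S.filter (fun p => p.1 ∉ H), (T ^ (1/2:ℝ)) ^ (-(w p.1))
                    = ∑ a ∈ (S.filter (fun p => p.1 ∉ H)).image Prod.fst,
                        (T ^ (1/2:ℝ)) ^ (-(w a)) := by
                      rw [Finset.sum_image]
                      intro p hp q hq h1
                      exact hfstinj p (Finset.mem_filter.mp hp).1 q (Finset.mem_filter.mp hq).1 h1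
                  _ ≤ 4 := sum_rpow_le hsqT _
            _ = 4 * (Ce * M * (te ^ (w μ) * s ^ (w m)) * T ^ (-(1:ℝ))) := by ring
        calc ∑ p ∈ S, ‖MvPowerSeries.coeff p.1 e * MvPowerSeries.coeff p.2 f‖
            = ∑ p ∈ S.filter (fun p => p.1 ∈ H),
                ‖MvPowerSeries.coeff p.1 e * MvPowerSeries.coeff p.2 f‖
              + ∑ p ∈ S.filter (fun p => p.1 ∉ H),
                ‖MvPowerSeries.coeff p.1 e * MvPowerSeries.coeff p.2 f‖ := hsplit.symm
          _ ≤ hcard * (Ce * M * (te ^ (w μ) * s ^ (w m)) * T ^ (-δ))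
              + 4 * (Ce * M * (te ^ (w μ) * s ^ (w m)) * T ^ (-(1:ℝ))) := add_le_add hb1 hb2
          _ = (Ce * te ^ (w μ) * (hcard * T ^ (-δ) + 4 * T ^ (-(1:ℝ)))) * (M * s ^ (w m)) := by
              ring
          _ ≤ ε / 2 * (M * s ^ (w m)) :=
              mul_le_mul_of_nonneg_right hTail (mul_nonneg hM0.le hsm.le)
      -- assemble
      have hgb : ‖MvPowerSeries.coeff (m + μ) (e * f)‖ ≤ Cg * tg ^ (w μ) * s ^ (w m) := by
        refine le_trans (hbg (m + μ)) ?_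
        rw [w_add, Real.rpow_add htg0]
        have h5 : tg ^ (w m) ≤ s ^ (w m) := Real.rpow_le_rpow htg0.le hstg (w_nonneg m)
        calc Cg * (tg ^ (w m) * tg ^ (w μ))
            ≤ Cg * (s ^ (w m) * tg ^ (w μ)) := by
              apply mul_le_mul_of_nonneg_left _ hCg
              exact mul_le_mul_of_nonneg_right h5 htgmu.le
          _ = Cg * tg ^ (w μ) * s ^ (w m) := by ring
      have heq : MvPowerSeries.coeff μ e * MvPowerSeries.coeff m f
          = MvPowerSeries.coeff (m + μ) (e * f)
            - ∑ p ∈ S, MvPowerSeries.coeff p.1 e * MvPowerSeries.coeff p.2 f := by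
        rw [hco, hSsum]; ring
      have hnorm : ε * ‖MvPowerSeries.coeff m f‖
          ≤ Cg * tg ^ (w μ) * s ^ (w m) + ε / 2 * (M * s ^ (w m)) := by
        calc ε * ‖MvPowerSeries.coeff m f‖
            = ‖MvPowerSeries.coeff μ e * MvPowerSeries.coeff m f‖ := by
              rw [norm_mul, hε]
          _ ≤ ‖MvPowerSeries.coeff (m + μ) (e * f)‖
              + ‖∑ p ∈ S, MvPowerSeries.coeff p.1 e * MvPowerSeries.coeff p.2 f‖ := by
              rw [heq]; exact norm_sub_le _ _
          _ ≤ Cg * tg ^ (w μ) * s ^ (w m) + ε / 2 * (M * s ^ (w m)) := add_le_add hgb hrest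
      have hfin : ε * ‖MvPowerSeries.coeff m f‖ ≤ ε * (M * s ^ (w m)) := by
        have h6 : Cg * tg ^ (w μ) * s ^ (w m) ≤ (ε * M / 2) * s ^ (w m) :=
          mul_le_mul_of_nonneg_right hMkey hsm.le
        calc ε * ‖MvPowerSeries.coeff m f‖
            ≤ Cg * tg ^ (w μ) * s ^ (w m) + ε / 2 * (M * s ^ (w m)) := hnorm
          _ ≤ (ε * M / 2) * s ^ (w m) + ε / 2 * (M * s ^ (w m)) := by linarith
          _ = ε * (M * s ^ (w m)) := by ring
      exact le_of_mul_le_mul_left hfin hε0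
  apply isConv_of_wb
  exact ⟨s, M, hs1, fun d => main (rank d + 1) d (Nat.lt_succ_self _)⟩

lemma w_zero : w 0 = 0 := by unfold w; simp

lemma isConv_of_pd (N : R2) (h0 : IsConv (pd 0 N)) (h1 : IsConv (pd 1 N)) : IsConv N := by
  classical
  obtain ⟨t0, C0, ht0, hC0, hb0⟩ := wb_of_isConv h0
  obtain ⟨t1, C1, ht1, hC1, hb1⟩ := wb_of_isConv h1
  apply isConv_of_wb
  refine ⟨max t0 t1, max C0 C1 + ‖MvPowerSeries.coeff 0 N‖,
    le_trans ht0 (le_max_left _ _), ?_⟩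
  have htm : (1:ℝ) ≤ max t0 t1 := le_trans ht0 (le_max_left _ _)
  have htm0 : (0:ℝ) < max t0 t1 := by linarith
  have hbi : ∀ i : Fin 2, ∀ a : I2,
      ‖MvPowerSeries.coeff a (pd i N)‖ ≤ max C0 C1 * (max t0 t1) ^ (w a) := by
    intro i a
    have hi : i = 0 ∨ i = 1 := by omega
    rcases hi with rfl | rfl
    · exact le_trans (hb0 a) (mul_le_mul (le_max_left _ _)
        (Real.rpow_le_rpow (by linarith) (le_max_left _ _) (w_nonneg a))
        (Real.rpow_pos_of_pos (by linarith) _).le (le_trans hC0 (le_max_left _ _)))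
    · exact le_trans (hb1 a) (mul_le_mul (le_max_right _ _)
        (Real.rpow_le_rpow (by linarith) (le_max_right _ _) (w_nonneg a))
        (Real.rpow_pos_of_pos (by linarith) _).le (le_trans hC0 (le_max_left _ _)))
  intro d
  have hCnn : (0:ℝ) ≤ max C0 C1 := le_trans hC0 (le_max_left _ _)
  have hrp : (0:ℝ) < (max t0 t1) ^ (w d) := Real.rpow_pos_of_pos htm0 _
  by_cases hd : d = 0
  · subst hd
    rw [w_zero, Real.rpow_zero]
    linarith [norm_nonneg (MvPowerSeries.coeff (0:I2) N)]
  · have hex : ∃ i : Fin 2, d i ≠ 0 := by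
      by_contra hc
      push_neg at hc
      exact hd (Finsupp.ext fun i => hc i)
    obtain ⟨i, hi⟩ := hex
    obtain ⟨d', hd'⟩ : ∃ x : I2, x = d - Finsupp.single i 1 := ⟨_, rfl⟩
    have hadd : d' + Finsupp.single i 1 = d := by
      rw [hd']
      ext j
      by_cases hj : j = i
      · subst hj
        simp only [Finsupp.add_apply, Finsupp.tsub_apply, Finsupp.single_eq_same]
        omega
      · simp only [Finsupp.add_apply, Finsupp.tsub_apply,
          Finsupp.single_eq_of_ne (fun h => hj h)]
        omega
    have hdi : d' i + 1 = d i := by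
      rw [hd']
      simp only [Finsupp.tsub_apply, Finsupp.single_eq_same]
      omega
    have hco : MvPowerSeries.coeff d' (pd i N)
        = ((d' i : ℂ) + 1) * MvPowerSeries.coeff (d' + Finsupp.single i 1) N := rfl
    have hnrm : ‖MvPowerSeries.coeff d' (pd i N)‖
        = (d i : ℝ) * ‖MvPowerSeries.coeff d N‖ := by
      rw [hco, hadd, norm_mul]
      congr 1
      have : ((d' i : ℂ) + 1) = ((d' i + 1 : ℕ) : ℂ) := by push_cast; ring
      rw [this, hdi, Complex.norm_natCast]
    have hone : (1:ℝ) ≤ (d i : ℝ) := by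
      have : 1 ≤ d i := Nat.one_le_iff_ne_zero.mpr hi
      exact_mod_cast this
    have hwd : w d' ≤ w d := by
      rw [← hadd, w_add]
      linarith [w_nonneg (Finsupp.single i 1)]
    calc ‖MvPowerSeries.coeff d N‖
        ≤ (d i : ℝ) * ‖MvPowerSeries.coeff d N‖ := by
          nlinarith [norm_nonneg (MvPowerSeries.coeff d N)]
      _ = ‖MvPowerSeries.coeff d' (pd i N)‖ := hnrm.symm
      _ ≤ max C0 C1 * (max t0 t1) ^ (w d') := hbi i d'
      _ ≤ max C0 C1 * (max t0 t1) ^ (w d) := by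
          apply mul_le_mul_of_nonneg_left _ hCnn
          exact Real.rpow_le_rpow_of_exponent_le htm hwd
      _ ≤ (max C0 C1 + ‖MvPowerSeries.coeff 0 N‖) * (max t0 t1) ^ (w d) := by
          have := norm_nonneg (MvPowerSeries.coeff (0:I2) N)
          nlinarith

theorem stmt1 (A C : Fin 2 → R2)
    (hA : ∀ i, IsConv (A i)) (hC : ∀ i, IsConv (C i))
    -- X ⋔ Y : the tangency locus {det(X,Y) = 0} has codimension ≥ 1 :
    (htr : A 0 * C 1 - A 1 * C 0 ≠ 0)
    (N : R2)
    -- X·N is meromorphic :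
    (hXN : ∃ g d : R2, IsConv g ∧ IsConv d ∧ d ≠ 0 ∧ d * lieD A N = g)
    -- Y·N is meromorphic :
    (hYN : ∃ g d : R2, IsConv g ∧ IsConv d ∧ d ≠ 0 ∧ d * lieD C N = g) :
    IsConv N := by
  obtain ⟨gX, dX, hgX, hdX, hdX0, hEX⟩ := hXN
  obtain ⟨gY, dY, hgY, hdY, hdY0, hEY⟩ := hYN
  unfold lieD at hEX hEY
  have hE0 : (A 0 * C 1 - A 1 * C 0) * (dX * dY) ≠ 0 :=
    mul_ne_zero htr (mul_ne_zero hdX0 hdY0)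
  have h0 : (A 0 * C 1 - A 1 * C 0) * (dX * dY) * pd 0 N
      = C 1 * dY * gX - A 1 * dX * gY := by
    linear_combination (C 1 * dY) * hEX - (A 1 * dX) * hEY
  have h1 : (A 0 * C 1 - A 1 * C 0) * (dX * dY) * pd 1 N
      = A 0 * dX * gY - C 0 * dY * gX := by
    linear_combination (A 0 * dX) * hEY - (C 0 * dY) * hEX
  have hIC : IsConv ((A 0 * C 1 - A 1 * C 0) * (dX * dY)) :=
    isConv_mul (isConv_sub (isConv_mul (hA 0) (hC 1)) (isConv_mul (hA 1) (hC 0)))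
      (isConv_mul hdX hdY)
  have hp0 : IsConv (pd 0 N) := by
    apply isConv_of_mul_left hE0 hIC
    rw [h0]
    exact isConv_sub (isConv_mul (isConv_mul (hC 1) hdY) hgX)
      (isConv_mul (isConv_mul (hA 1) hdX) hgY)
  have hp1 : IsConv (pd 1 N) := by
    apply isConv_of_mul_left hE0 hIC
    rw [h1]
    exact isConv_sub (isConv_mul (isConv_mul (hA 0) hdX) hgY)
      (isConv_mul (isConv_mul (hC 0) hdY) hgX)
  exact isConv_of_pd N hp0 hp1
end
end

section
/- Let Z = A∂x + B∂y and Y = C∂x + D∂y be meromorphic vector field germs at the origin of ℂ² with [Z,Y] = δY, and set Δ := AD − BC. Then Z·Δ = (δ + ∂A/∂x + ∂B/∂y)·Δ. In particular the tangency locus {Δ=0} is invariant by Z (a union of separatrices of Z). -/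
/- Statement 3: for Z = A∂x + B∂y, Y = C∂x + D∂y with [Z,Y] = δY and Δ := AD − BC one
has Z·Δ = (δ + ∂A/∂x + ∂B/∂y)·Δ.  In particular {Δ = 0} is invariant by Z (the cofactor
K := δ + div Z is holomorphic where Z is).  Pointwise formulation at a point p where all
components are differentiable. -/

noncomputable section

/-- ∂/∂x at p -/
def dX (f : ℂ × ℂ → ℂ) (p : ℂ × ℂ) : ℂ := fderiv ℂ f p (1, 0)

/-- ∂/∂y at p -/
def dY (f : ℂ × ℂ → ℂ) (p : ℂ × ℂ) : ℂ := fderiv ℂ f p (0, 1)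

/-- Lie derivative of the scalar function f along the vector field with components (A,B). -/
def lieD2 (A B : ℂ × ℂ → ℂ) (f : ℂ × ℂ → ℂ) (p : ℂ × ℂ) : ℂ :=
  A p * dX f p + B p * dY f p

theorem stmt3 (A B C D : ℂ × ℂ → ℂ) (δ : ℂ) (p : ℂ × ℂ)
    (hA : DifferentiableAt ℂ A p) (hB : DifferentiableAt ℂ B p)
    (hC : DifferentiableAt ℂ C p) (hD : DifferentiableAt ℂ D p)
    -- [Z,Y] = δ Y, componentwise: Z·C − Y·A = δC and Z·D − Y·B = δD :
    (hbrk1 : lieD2 A B C p - lieD2 C D A p = δ * C p)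
    (hbrk2 : lieD2 A B D p - lieD2 C D B p = δ * D p) :
    lieD2 A B (fun q => A q * D q - B q * C q) p
      = (δ + dX A p + dY B p) * (A p * D p - B p * C p) := by
  have hfd : fderiv ℂ (fun q => A q * D q - B q * C q) p
      = A p • fderiv ℂ D p + D p • fderiv ℂ A p - (B p • fderiv ℂ C p + C p • fderiv ℂ B p) := by
    rw [fderiv_fun_sub (f := fun q => A q * D q) (g := fun q => B q * C q) (hA.mul hD) (hB.mul hC), fderiv_fun_mul hA hD, fderiv_fun_mul hB hC]
  have h1 : dX (fun q => A q * D q - B q * C q) p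
      = A p * dX D p + D p * dX A p - (B p * dX C p + C p * dX B p) := by
    simp [dX, hfd]
  have h2 : dY (fun q => A q * D q - B q * C q) p
      = A p * dY D p + D p * dY A p - (B p * dY C p + C p * dY B p) := by
    simp [dY, hfd]
  simp only [lieD2] at hbrk1 hbrk2 ⊢
  rw [h1, h2]
  linear_combination A p * hbrk2 - B p * hbrk1
end
end

section
/- Let Z be a germ of a holomorphic vector field and Y = W/𝔭 a meromorphic vector field (W holomorphic vector field, 𝔭 holomorphic function, coprime) with [Z,Y] = δY and Y not holomorphic. Then the polar locus {𝔭 = 0} of Y is a separatrix of Z. -/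
/- Statement 5: if Z is a holomorphic vector field germ, Y = W/𝔭 a meromorphic vector
field (W holomorphic vector field and 𝔭 coprime, Y not holomorphic) with [Z,Y] = δY,
then the polar locus {𝔭 = 0} is a separatrix of Z, i.e. Z·𝔭 = K·𝔭 for some
holomorphic K.  Germs are represented by power series in ℂ[[x,y]]; the relation
[Z,Y] = δY is written with denominators cleared: 𝔭·[Z,W] = (δ𝔭 + Z·𝔭)·W. -/

noncomputable section
open MvPowerSeries

/-- Lie bracket of formal vector fields, componentwise. -/
def brk (Z W : Fin 2 → R2) (i : Fin 2) : R2 := lieD Z (W i) - lieD W (Z i)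

namespace S5

abbrev A := PowerSeries ℂ
abbrev B := PowerSeries A

/-- double coefficient: `i` = inner (y) index, `j` = outer (x) index. -/
def dc (i j : ℕ) (f : B) : ℂ := PowerSeries.coeff (R := ℂ) i (PowerSeries.coeff (R := A) j f)

lemma Bext {f g : B} (h : ∀ i j, dc i j f = dc i j g) : f = g := by
  apply PowerSeries.ext; intro j
  apply PowerSeries.ext; intro i
  exact h i j

lemma dc_add (i j : ℕ) (f g : B) : dc i j (f + g) = dc i j f + dc i j g := by
  simp [dc]

/-- `f` has `y`-degree `< n` in every slice. -/
def Low (n : ℕ) (f : B) : Prop := ∀ j i, n ≤ i → dc i j f = 0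

/-- divide an element of `A` by `X^n`, dropping lower-order terms -/
def shiftn (n : ℕ) (a : A) : A := PowerSeries.mk fun m => PowerSeries.coeff (R := ℂ) (m + n) a

lemma coeff_sub_X_pow_shiftn (n : ℕ) (a : A) {i : ℕ} (hi : n ≤ i) :
    PowerSeries.coeff (R := ℂ) i (a - PowerSeries.X ^ n * shiftn n a) = 0 := by
  obtain ⟨d, rfl⟩ := Nat.exists_eq_add_of_le hi
  rw [map_sub]
  rw [show n + d = d + n from Nat.add_comm n d, PowerSeries.coeff_X_pow_mul]
  simp [shiftn]

/-- the quotient coefficients in Weierstrass division of `h` by `g`,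
where `coeff 0 g = X^n * u` and `v = u⁻¹`. -/
def qc (g h : B) (n : ℕ) (v : A) : ℕ → A
  | j => (shiftn n (PowerSeries.coeff (R := A) j h -
      ∑ i ∈ (Finset.range j).attach,
        qc g h n v i * PowerSeries.coeff (R := A) (j - i) g)) * v
  termination_by j => j
  decreasing_by exact Finset.mem_range.mp i.2

/-- the (non-attached) carry term -/
def cj (g h : B) (n : ℕ) (v : A) (j : ℕ) : A :=
  PowerSeries.coeff (R := A) j h - ∑ i ∈ Finset.range j, qc g h n v i * PowerSeries.coeff (R := A) (j - i) g

lemma qc_eq (g h : B) (n : ℕ) (v : A) (j : ℕ) :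
    qc g h n v j = shiftn n (cj g h n v j) * v := by
  rw [qc, cj, Finset.sum_attach (Finset.range j) (fun i => qc g h n v i * PowerSeries.coeff (R := A) (j - i) g)]

/-- Weierstrass division, existence. -/
theorem wdiv (g : B) (n : ℕ) (u : A) (hu : IsUnit u)
    (hg0 : PowerSeries.coeff (R := A) 0 g = PowerSeries.X ^ n * u) (h : B) :
    ∃ q r : B, Low n r ∧ h = q * g + r := by
  classical
  set v : A := ↑hu.unit⁻¹ with hv
  have hvu : v * u = 1 := by
    rw [hv]; exact hu.unit.inv_mul
  set q : B := PowerSeries.mk (qc g h n v) with hq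
  refine ⟨q, h - q * g, ?_, by ring⟩
  intro j i hi
  -- coefficient of the product
  have hqg : PowerSeries.coeff (R := A) j (q * g)
      = (∑ k ∈ Finset.range j, qc g h n v k * PowerSeries.coeff (R := A) (j - k) g)
        + qc g h n v j * PowerSeries.coeff (R := A) 0 g := by
    rw [PowerSeries.coeff_mul,
      Finset.Nat.sum_antidiagonal_eq_sum_range_succ_mk
        (fun p => PowerSeries.coeff (R := A) p.1 q * PowerSeries.coeff (R := A) p.2 g) j,
      Finset.sum_range_succ]
    simp [hq, Nat.sub_self]
  have hcan : shiftn n (cj g h n v j) * v * (PowerSeries.X ^ n * u)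
      = PowerSeries.X ^ n * shiftn n (cj g h n v j) := by
    calc shiftn n (cj g h n v j) * v * (PowerSeries.X ^ n * u)
        = (v * u) * (PowerSeries.X ^ n * shiftn n (cj g h n v j)) := by ring
      _ = PowerSeries.X ^ n * shiftn n (cj g h n v j) := by rw [hvu, one_mul]
  have key : PowerSeries.coeff (R := A) j (h - q * g)
      = cj g h n v j - PowerSeries.X ^ n * shiftn n (cj g h n v j) := by
    rw [map_sub, hqg, qc_eq, hg0, hcan, cj]
    ring
  rw [dc, key, coeff_sub_X_pow_shiftn n _ hi]

/-- regularity: if `q * g` is `Low n` then `q = 0`. -/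
theorem low_mul_reg (g : B) (n : ℕ) (u : A) (hu : IsUnit u)
    (hg0 : PowerSeries.coeff (R := A) 0 g = PowerSeries.X ^ n * u)
    (q : B) (hlow : Low n (q * g)) : q = 0 := by
  classical
  by_contra hq
  have hex : ∃ j, PowerSeries.coeff (R := A) j q ≠ 0 := by
    by_contra hall
    push_neg at hall
    exact hq (PowerSeries.ext fun j => by simpa using hall j)
  let j := Nat.find hex
  have hj : PowerSeries.coeff (R := A) j q ≠ 0 := Nat.find_spec hex
  have hmin : ∀ m, m < j → PowerSeries.coeff (R := A) m q = 0 := by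
    intro m hm
    by_contra hne
    exact Nat.find_min hex hm hne
  have hcoeff : PowerSeries.coeff (R := A) j (q * g) = PowerSeries.coeff (R := A) j q * PowerSeries.coeff (R := A) 0 g := by
    rw [PowerSeries.coeff_mul,
      Finset.Nat.sum_antidiagonal_eq_sum_range_succ_mk
        (fun p => PowerSeries.coeff (R := A) p.1 q * PowerSeries.coeff (R := A) p.2 g) j,
      Finset.sum_range_succ]
    rw [Finset.sum_eq_zero, zero_add, Nat.sub_self]
    intro k hk
    rw [hmin k (Finset.mem_range.mp hk), zero_mul]
  have hne : PowerSeries.coeff (R := A) j q * u ≠ 0 := mul_ne_zero hj hu.ne_zero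
  have hw : PowerSeries.coeff (R := A) j q * PowerSeries.coeff (R := A) 0 g
      = PowerSeries.X ^ n * (PowerSeries.coeff (R := A) j q * u) := by
    rw [hg0]; ring
  obtain ⟨m, hm⟩ : ∃ m, PowerSeries.coeff (R := ℂ) m (PowerSeries.coeff (R := A) j q * u) ≠ 0 := by
    by_contra hall
    push_neg at hall
    exact hne (PowerSeries.ext fun m => by simpa using hall m)
  have : dc (m + n) j (q * g) ≠ 0 := by
    rw [dc, hcoeff, hw, PowerSeries.coeff_X_pow_mul]
    exact hm
  exact this (hlow j (m + n) (Nat.le_add_left n m))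


abbrev Pl := Polynomial A

/-- `y` as an element of `B` -/
def yB : B := PowerSeries.C (R := A) PowerSeries.X

/-- interpret a polynomial in `y` with `ℂ⟦x⟧` coefficients as an element of `B` -/
def phi : Pl →+* B :=
  Polynomial.eval₂RingHom (PowerSeries.map (PowerSeries.C (R := ℂ))) yB

lemma dc_phi (F : Pl) (i j : ℕ) : dc i j (phi F) = PowerSeries.coeff (R := ℂ) j (F.coeff i) := by
  induction F using Polynomial.induction_on' with
  | add p q hp hq =>
    rw [map_add, dc_add, hp, hq, Polynomial.coeff_add, map_add]
  | monomial d a =>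
    rw [phi, Polynomial.coe_eval₂RingHom, Polynomial.eval₂_monomial]
    have h1 : (yB : B) ^ d = PowerSeries.C (R := A) (PowerSeries.X ^ d) := by
      rw [yB, ← map_pow]
    rw [h1]
    have h2 : PowerSeries.coeff (R := A) j (PowerSeries.map (PowerSeries.C (R := ℂ)) a * PowerSeries.C (R := A) (PowerSeries.X ^ d))
        = PowerSeries.C (R := ℂ) (PowerSeries.coeff (R := ℂ) j a) * PowerSeries.X ^ d := by
      rw [PowerSeries.coeff_mul_C, PowerSeries.coeff_map]
    rw [dc, h2, PowerSeries.coeff_C_mul, PowerSeries.coeff_X_pow, Polynomial.coeff_monomial]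
    by_cases hid : i = d
    · simp [hid]
    · rw [if_neg hid, if_neg (fun hh => hid hh.symm)]; simp

lemma phi_injective : Function.Injective phi := by
  intro F G h
  apply Polynomial.ext; intro i
  apply PowerSeries.ext; intro j
  have := congrArg (dc i j) h
  rwa [dc_phi, dc_phi] at this

lemma low_phi {n : ℕ} {F : Pl} (hF : ∀ i, n ≤ i → F.coeff i = 0) : Low n (phi F) := by
  intro j i hi
  rw [dc_phi, hF i hi, map_zero]

/-- recover a polynomial from a `Low n` element -/
def toPoly (n : ℕ) (f : B) : Pl :=
  ∑ i ∈ Finset.range n, Polynomial.C (PowerSeries.mk fun j => dc i j f) * Polynomial.X ^ i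

lemma coeff_toPoly (n : ℕ) (f : B) (i : ℕ) :
    (toPoly n f).coeff i = if i < n then PowerSeries.mk (fun j => dc i j f) else 0 := by
  classical
  rw [toPoly, Polynomial.finset_sum_coeff]
  simp only [Polynomial.coeff_C_mul, Polynomial.coeff_X_pow, mul_ite, mul_one, mul_zero]
  rw [Finset.sum_ite_eq (Finset.range n) i (fun k => PowerSeries.mk fun j => dc k j f)]
  simp [Finset.mem_range]

lemma phi_toPoly {n : ℕ} {f : B} (hf : Low n f) : phi (toPoly n f) = f := by
  apply Bext; intro i j
  rw [dc_phi, coeff_toPoly]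
  by_cases h : i < n
  · simp [h]
  · simp only [h, if_false, map_zero]
    exact (hf j i (Nat.not_lt.mp h)).symm

lemma toPoly_coeff_high (n : ℕ) (f : B) {i : ℕ} (hi : n ≤ i) : (toPoly n f).coeff i = 0 := by
  rw [coeff_toPoly]
  simp [Nat.not_lt.mpr hi]

/-- reduction mod `x` -/
def eps : Pl →+* Polynomial ℂ := Polynomial.mapRingHom (PowerSeries.constantCoeff (R := ℂ))

lemma eps_coeff (F : Pl) (i : ℕ) :
    (eps F).coeff i = PowerSeries.constantCoeff (R := ℂ) (F.coeff i) := by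
  rw [eps, Polynomial.coe_mapRingHom, Polynomial.coeff_map]

/-- Weierstrass preparation -/
theorem prep (g : B) (n : ℕ) (u : A) (hu : IsUnit u)
    (hg0 : PowerSeries.coeff (R := A) 0 g = PowerSeries.X ^ n * u) (hn : 1 ≤ n) :
    ∃ (w : B) (P : Pl), IsUnit w ∧ g = w * phi P ∧ P.Monic ∧ P.natDegree = n ∧
      eps P = Polynomial.X ^ n := by
  obtain ⟨q, r, hlow, heq⟩ := wdiv g n u hu hg0 (yB ^ n)
  -- coeff 0 computations
  have hyB0 : PowerSeries.coeff (R := A) 0 ((yB : B) ^ n) = PowerSeries.X ^ n := by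
    rw [show (yB : B) ^ n = PowerSeries.C (R := A) (PowerSeries.X ^ n) by rw [yB, ← map_pow]]
    simp [PowerSeries.coeff_zero_eq_constantCoeff]
  have hq0 : PowerSeries.coeff (R := A) 0 (q * g)
      = PowerSeries.coeff (R := A) 0 q * (PowerSeries.X ^ n * u) := by
    rw [PowerSeries.coeff_mul]
    rw [Finset.Nat.sum_antidiagonal_eq_sum_range_succ_mk
        (fun p => PowerSeries.coeff (R := A) p.1 q * PowerSeries.coeff (R := A) p.2 g) 0]
    simp [hg0]
  have h0 : PowerSeries.X ^ n = PowerSeries.coeff (R := A) 0 q * (PowerSeries.X ^ n * u)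
      + PowerSeries.coeff (R := A) 0 r := by
    have := congrArg (PowerSeries.coeff (R := A) 0) heq
    rwa [hyB0, map_add, hq0] at this
  -- r₀ = 0
  have hr0 : PowerSeries.coeff (R := A) 0 r = 0 := by
    have hdvd : (PowerSeries.X : A) ^ n ∣ PowerSeries.coeff (R := A) 0 r := by
      have : PowerSeries.coeff (R := A) 0 r
          = PowerSeries.X ^ n * (1 - PowerSeries.coeff (R := A) 0 q * u) := by
        linear_combination -h0
      exact ⟨_, this⟩
    apply PowerSeries.ext; intro i
    by_cases hi : n ≤ i
    · exact hlow 0 i hi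
    · rw [map_zero]
      rw [PowerSeries.X_pow_dvd_iff] at hdvd
      exact hdvd i (Nat.not_le.mp hi)
  -- q is a unit
  have hqu : IsUnit q := by
    have hXn : (PowerSeries.X : A) ^ n ≠ 0 := pow_ne_zero _ PowerSeries.X_ne_zero
    rw [hr0, add_zero] at h0
    have h1 : PowerSeries.X ^ n * (PowerSeries.coeff (R := A) 0 q * u) = PowerSeries.X ^ n * 1 := by
      linear_combination -h0
    have h2 : PowerSeries.coeff (R := A) 0 q * u = 1 := mul_left_cancel₀ hXn h1
    rw [PowerSeries.isUnit_iff_constantCoeff, ← PowerSeries.coeff_zero_eq_constantCoeff_apply]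
    exact IsUnit.of_mul_eq_one _ h2
  -- the polynomial
  set R : Pl := toPoly n r with hR
  set P : Pl := Polynomial.X ^ n - R with hP
  have hphiP : phi P = q * g := by
    rw [hP, map_sub, map_pow]
    have hphiX : phi Polynomial.X = yB := by
      rw [phi, Polynomial.coe_eval₂RingHom, Polynomial.eval₂_X]
    rw [hphiX, phi_toPoly hlow]
    rw [heq]; ring
  have hdegR : R.degree < (n : ℕ) := by
    apply Polynomial.degree_lt_iff_coeff_zero R n |>.mpr
    intro m hm
    exact toPoly_coeff_high n r (by exact_mod_cast hm)
  have hmonic : P.Monic := Polynomial.monic_X_pow_sub hdegR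
  have hdeg : P.natDegree = n := by
    have hPdeg : P.degree = (n : ℕ) := by
      rw [hP]
      rw [Polynomial.degree_sub_eq_left_of_degree_lt]
      · exact Polynomial.degree_X_pow n
      · rw [Polynomial.degree_X_pow]; exact hdegR
    exact Polynomial.natDegree_eq_of_degree_eq_some hPdeg
  have hepsR : eps R = 0 := by
    apply Polynomial.ext; intro i
    rw [eps_coeff]
    rw [hR, coeff_toPoly]
    by_cases h : i < n
    · simp only [h, if_true]
      rw [← PowerSeries.coeff_zero_eq_constantCoeff_apply, PowerSeries.coeff_mk]
      rw [dc, hr0, map_zero]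
      simp
    · simp [h]
  have heps : eps P = Polynomial.X ^ n := by
    rw [hP, map_sub, map_pow, hepsR, sub_zero]
    congr 1
    rw [eps, Polynomial.coe_mapRingHom, Polynomial.map_X]
  refine ⟨↑hqu.unit⁻¹, P, Units.isUnit _, ?_, hmonic, hdeg, heps⟩
  rw [hphiP, ← mul_assoc]
  rw [show (↑hqu.unit⁻¹ : B) * q = 1 by exact hqu.unit.inv_mul]
  rw [one_mul]


/-- a monic divisor of `X^n` over `ℂ` is a power of `X` -/
lemma monic_dvd_X_pow (G : Polynomial ℂ) (hG : G.Monic) (n : ℕ)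
    (h : G ∣ Polynomial.X ^ n) : G = Polynomial.X ^ G.natDegree := by
  obtain ⟨m, _, hass⟩ := (dvd_prime_pow Polynomial.prime_X n).mp h
  obtain ⟨w, hw⟩ := hass.symm
  obtain ⟨c, hc, hcw⟩ := Polynomial.isUnit_iff.mp w.isUnit
  have hG' : G = Polynomial.C c * Polynomial.X ^ m := by
    rw [← hw, ← hcw]; ring
  have hc1 : c = 1 := by
    have hmm := hG
    rw [Polynomial.Monic, hG', Polynomial.leadingCoeff_mul, Polynomial.leadingCoeff_C,
      Polynomial.leadingCoeff_X_pow, mul_one] at hmm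
    exact hmm
  have hG'' : G = Polynomial.X ^ m := by rw [hG', hc1, map_one, one_mul]
  rw [hG'', Polynomial.natDegree_X_pow]

/-- factor a monic distinguished polynomial into monic distinguished primes -/
theorem MF : ∀ (n : ℕ) (P : Pl), P.Monic → P.natDegree = n → eps P = Polynomial.X ^ n →
    ∃ L : Multiset Pl, (∀ Q ∈ L, Q.Monic ∧ Prime Q ∧ eps Q = Polynomial.X ^ Q.natDegree ∧
      1 ≤ Q.natDegree) ∧ L.prod = P := by
  intro n
  induction n using Nat.strong_induction_on with
  | _ n ih =>
    intro P hmon hdeg heps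
    rcases Nat.eq_zero_or_pos n with hn0 | hnpos
    · refine ⟨0, by simp, ?_⟩
      rw [Multiset.prod_zero]
      have hPC : P = Polynomial.C (P.coeff 0) := Polynomial.eq_C_of_natDegree_eq_zero (hdeg.trans hn0)
      have hlc : P.coeff 0 = 1 := by
        have hmm := hmon
        rw [Polynomial.Monic, Polynomial.leadingCoeff, hdeg, hn0] at hmm
        exact hmm
      rw [hPC, hlc, map_one]
    · have hP0 : P ≠ 0 := hmon.ne_zero
      have hPnu : ¬ IsUnit P := by
        intro hu
        have h1 : P.degree = (0 : ℕ) := by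
          simpa using Polynomial.degree_eq_zero_of_isUnit hu
        have h2 : P.degree = (n : ℕ) := by
          rw [Polynomial.degree_eq_natDegree hP0, hdeg]
        rw [h1] at h2
        have h3 : (0 : ℕ) = n := by exact_mod_cast h2
        omega
      obtain ⟨q, hqirr, s, hqs⟩ : ∃ q, Irreducible q ∧ ∃ s, P = q * s := by
        obtain ⟨q, hq, hdvd⟩ := WfDvdMonoid.exists_irreducible_factor hPnu hP0
        obtain ⟨s, hs⟩ := hdvd
        exact ⟨q, hq, s, hs⟩
      have hlc : q.leadingCoeff * s.leadingCoeff = 1 := by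
        rw [← Polynomial.leadingCoeff_mul, ← hqs, hmon]
      have hqlu : IsUnit q.leadingCoeff := IsUnit.of_mul_eq_one _ hlc
      set w : Aˣ := hqlu.unit with hwdef
      have hwcoe : (↑w : A) = q.leadingCoeff := rfl
      set Q : Pl := Polynomial.C ((↑w⁻¹ : A)) * q with hQ
      set S : Pl := Polynomial.C ((↑w : A)) * s with hS
      have hCC : Polynomial.C ((↑w⁻¹ : A)) * Polynomial.C ((↑w : A)) = (1 : Pl) := by
        rw [← map_mul, w.inv_mul, map_one]
      have hQS : Q * S = P := by
        rw [hQ, hS, hqs]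
        calc Polynomial.C ((↑w⁻¹ : A)) * q * (Polynomial.C ((↑w : A)) * s)
            = Polynomial.C ((↑w⁻¹ : A)) * Polynomial.C ((↑w : A)) * (q * s) := by ring
          _ = q * s := by rw [hCC, one_mul]
      have hQmon : Q.Monic := by
        have : Q.leadingCoeff = 1 := by
          rw [hQ, Polynomial.leadingCoeff_mul, Polynomial.leadingCoeff_C, ← hwcoe, w.inv_mul]
        exact this
      have hSmon : S.Monic := by
        have h1 : Q.leadingCoeff * S.leadingCoeff = 1 := by
          rw [← Polynomial.leadingCoeff_mul, hQS, hmon]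
        rwa [hQmon, one_mul] at h1
      have hQirr : Irreducible Q := by
        have h1 := irreducible_units_mul (y := q)
          (Units.map ((Polynomial.C : A →+* Pl) : A →* Pl) w⁻¹)
        have h2 : ((Units.map ((Polynomial.C : A →+* Pl) : A →* Pl) w⁻¹ : Plˣ) : Pl)
            = Polynomial.C ((↑w⁻¹ : A)) := rfl
        rw [h2] at h1
        rw [hQ]
        exact h1.mpr hqirr
      have hQpr : Prime Q := (UniqueFactorizationMonoid.irreducible_iff_prime).mp hQirr
      have hepsQS : eps Q * eps S = Polynomial.X ^ n := by
        rw [← map_mul, hQS, heps]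
      have hepsQmon : (eps Q).Monic := hQmon.map _
      have hepsSmon : (eps S).Monic := hSmon.map _
      have hndQ : (eps Q).natDegree = Q.natDegree := hQmon.natDegree_map _
      have hndS : (eps S).natDegree = S.natDegree := hSmon.natDegree_map _
      have hQdist : eps Q = Polynomial.X ^ Q.natDegree := by
        rw [← hndQ]
        exact monic_dvd_X_pow _ hepsQmon n ⟨eps S, hepsQS.symm⟩
      have hSdist : eps S = Polynomial.X ^ S.natDegree := by
        rw [← hndS]
        exact monic_dvd_X_pow _ hepsSmon n ⟨eps Q, by rw [← hepsQS]; ring⟩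
      have hdQpos : 1 ≤ Q.natDegree := by
        by_contra hlt
        push_neg at hlt
        have h0 : Q.natDegree = 0 := by omega
        have hQC : Q = Polynomial.C (Q.coeff 0) := Polynomial.eq_C_of_natDegree_eq_zero h0
        have hc1 : Q.coeff 0 = 1 := by
          have hmm := hQmon
          rw [Polynomial.Monic, Polynomial.leadingCoeff, h0] at hmm
          exact hmm
        rw [hc1, map_one] at hQC
        exact hQirr.not_isUnit (hQC ▸ isUnit_one)
      have hsum : Q.natDegree + S.natDegree = n := by
        rw [← hdeg, ← hQS, hQmon.natDegree_mul hSmon]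
      have hSlt : S.natDegree < n := by omega
      obtain ⟨L', hL', hL'prod⟩ := ih S.natDegree hSlt S hSmon rfl hSdist
      refine ⟨Q ::ₘ L', ?_, ?_⟩
      · intro T hT
        rcases Multiset.mem_cons.mp hT with h | h
        · subst h; exact ⟨hQmon, hQpr, hQdist, hdQpos⟩
        · exact hL' T h
      · rw [Multiset.prod_cons, hL'prod, hQS]

/-- the constant slice of `phi Q` for a distinguished `Q` -/
lemma coeff0_phi_dist (Q : Pl) (hdist : eps Q = Polynomial.X ^ Q.natDegree) :
    PowerSeries.coeff (R := A) 0 (phi Q) = PowerSeries.X ^ Q.natDegree := by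
  apply PowerSeries.ext; intro i
  have h1 : PowerSeries.coeff (R := ℂ) i (PowerSeries.coeff (R := A) 0 (phi Q)) = dc i 0 (phi Q) := rfl
  rw [h1, dc_phi]
  rw [PowerSeries.coeff_zero_eq_constantCoeff_apply, ← eps_coeff, hdist]
  rw [Polynomial.coeff_X_pow, PowerSeries.coeff_X_pow]

/-- a distinguished prime polynomial is prime in `B` -/
theorem prime_phi (Q : Pl) (hmon : Q.Monic) (hd : 1 ≤ Q.natDegree)
    (hdist : eps Q = Polynomial.X ^ Q.natDegree) (hpr : Prime Q) : Prime (phi Q) := by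
  set d := Q.natDegree with hddef
  have hg0 : PowerSeries.coeff (R := A) 0 (phi Q) = PowerSeries.X ^ d * 1 := by
    rw [mul_one]; exact coeff0_phi_dist Q hdist
  -- divisibility transfer
  have hdvd_iff : ∀ F : Pl, phi Q ∣ phi F → Q ∣ F := by
    intro F ⟨c, hc⟩
    have hdiv := Polynomial.modByMonic_add_div F Q
    have hlowm : Low d (phi (F %ₘ Q)) := by
      apply low_phi
      intro i hi
      apply Polynomial.coeff_eq_zero_of_degree_lt
      calc (F %ₘ Q).degree < Q.degree := Polynomial.degree_modByMonic_lt F hmon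
        _ = (d : ℕ) := by rw [Polynomial.degree_eq_natDegree hmon.ne_zero]
        _ ≤ (i : ℕ) := by exact_mod_cast hi
    have hkey : (c - phi (F /ₘ Q)) * phi Q = phi (F %ₘ Q) := by
      have h2 : phi (F %ₘ Q) + phi Q * phi (F /ₘ Q) = phi F := by
        rw [← map_mul, ← map_add, hdiv]
      rw [hc] at h2
      linear_combination -h2
    have hz : c - phi (F /ₘ Q) = 0 :=
      low_mul_reg (phi Q) d 1 isUnit_one hg0 _ (by rw [hkey]; exact hlowm)
    have hm0 : phi (F %ₘ Q) = 0 := by rw [← hkey, hz, zero_mul]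
    have : F %ₘ Q = 0 := phi_injective (by rw [hm0, map_zero])
    exact (Polynomial.modByMonic_eq_zero_iff_dvd hmon).mp this
  constructor
  · intro h0
    exact hpr.ne_zero (phi_injective (by rw [h0, map_zero]))
  constructor
  · intro hu
    rw [PowerSeries.isUnit_iff_constantCoeff, ← PowerSeries.coeff_zero_eq_constantCoeff_apply,
      hg0, mul_one] at hu
    rw [PowerSeries.isUnit_iff_constantCoeff] at hu
    rw [map_pow, PowerSeries.constantCoeff_X, zero_pow (by omega : d ≠ 0)] at hu
    exact not_isUnit_zero hu
  · intro a b ⟨c, hc⟩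
    obtain ⟨qa, ra, hlowa, heqa⟩ := wdiv (phi Q) d 1 isUnit_one hg0 a
    obtain ⟨qb, rb, hlowb, heqb⟩ := wdiv (phi Q) d 1 isUnit_one hg0 b
    have hra : phi (toPoly d ra) = ra := phi_toPoly hlowa
    have hrb : phi (toPoly d rb) = rb := phi_toPoly hlowb
    have hdvdr : phi Q ∣ ra * rb := by
      refine ⟨c - (qa * b + ra * qb), ?_⟩
      have : ra * rb = a * b - phi Q * (qa * b + ra * qb) := by
        rw [heqa, heqb]; ring
      rw [this, hc]; ring
    rw [← hra, ← hrb, ← map_mul] at hdvdr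
    have hQdvd : Q ∣ toPoly d ra * toPoly d rb := hdvd_iff _ hdvdr
    have key : ∀ (r : B), Low d r → Q ∣ toPoly d r → phi Q ∣ r := by
      intro r hlow hQr
      have : toPoly d r = 0 := by
        by_contra hne
        obtain ⟨t, ht⟩ := hQr
        have ht0 : t ≠ 0 := by
          intro h; rw [h, mul_zero] at ht; exact hne ht
        have h1 : (toPoly d r).natDegree = Q.natDegree + t.natDegree := by
          rw [ht, Polynomial.natDegree_mul hpr.ne_zero ht0]
        have h2 : (toPoly d r).natDegree < d := by
          by_contra hge
          push_neg at hge
          have := toPoly_coeff_high d r hge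
          exact hne (Polynomial.leadingCoeff_eq_zero.mp this)
        omega
      have : r = 0 := by rw [← phi_toPoly hlow, this, map_zero]
      rw [this]
      exact dvd_zero _
    rcases hpr.2.2 _ _ hQdvd with h | h
    · left
      have : phi Q ∣ ra := key ra hlowa h
      obtain ⟨e, he⟩ := this
      exact ⟨qa + e, by rw [heqa, he]; ring⟩
    · right
      have : phi Q ∣ rb := key rb hlowb h
      obtain ⟨e, he⟩ := this
      exact ⟨qb + e, by rw [heqb, he]; ring⟩

lemma X_prime_B : Prime (PowerSeries.X : B) := by
  constructor
  · exact PowerSeries.X_ne_zero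
  constructor
  · intro hu
    rw [PowerSeries.isUnit_iff_constantCoeff, PowerSeries.constantCoeff_X] at hu
    exact not_isUnit_zero hu
  · intro a b h
    rw [PowerSeries.X_dvd_iff] at h
    rw [map_mul] at h
    rcases mul_eq_zero.mp h with h' | h'
    · left; rw [PowerSeries.X_dvd_iff]; exact h'
    · right; rw [PowerSeries.X_dvd_iff]; exact h'

/-- strip off the largest power of `X` -/
lemma strip {R : Type*} [Semiring R] (f : PowerSeries R) (hf : f ≠ 0) :
    ∃ (k : ℕ) (g : PowerSeries R), f = PowerSeries.X ^ k * g ∧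
      PowerSeries.coeff (R := R) 0 g ≠ 0 := by
  classical
  have hex : ∃ j, PowerSeries.coeff (R := R) j f ≠ 0 := by
    by_contra hall
    push_neg at hall
    exact hf (PowerSeries.ext fun j => by simpa using hall j)
  set k := Nat.find hex with hk
  refine ⟨k, PowerSeries.mk fun m => PowerSeries.coeff (R := R) (m + k) f, ?_, ?_⟩
  · apply PowerSeries.ext; intro m
    by_cases hm : m < k
    · have h1 : PowerSeries.coeff (R := R) m f = 0 := by
        by_contra hne
        exact Nat.find_min hex hm hne
      have h2 : PowerSeries.coeff (R := R) m (PowerSeries.X ^ k * PowerSeries.mk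
          (fun m => PowerSeries.coeff (R := R) (m + k) f)) = 0 := by
        exact (PowerSeries.X_pow_dvd_iff (n := k)).mp
          (dvd_mul_right (PowerSeries.X ^ k)
            (PowerSeries.mk fun m => PowerSeries.coeff (R := R) (m + k) f)) m hm
      rw [h1, h2]
    · obtain ⟨e, rfl⟩ := Nat.exists_eq_add_of_le (Nat.not_lt.mp hm)
      rw [show k + e = e + k from Nat.add_comm k e, PowerSeries.coeff_X_pow_mul,
        PowerSeries.coeff_mk]
  · simpa using Nat.find_spec hex

/-- `B = ℂ⟦y⟧⟦x⟧` is a unique factorization domain. -/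
theorem ufdB : UniqueFactorizationMonoid B := by
  apply UniqueFactorizationMonoid.of_exists_prime_factors
  intro f hf
  obtain ⟨k, g, hfk, hg0⟩ := strip f hf
  obtain ⟨n, w, hgw, hw0⟩ := strip (PowerSeries.coeff (R := A) 0 g) hg0
  have hwu : IsUnit w := by
    rw [PowerSeries.isUnit_iff_constantCoeff, ← PowerSeries.coeff_zero_eq_constantCoeff_apply]
    exact Ne.isUnit hw0
  rcases Nat.eq_zero_or_pos n with hn0 | hnpos
  · -- g is a unit
    have hgu : IsUnit g := by
      rw [PowerSeries.isUnit_iff_constantCoeff, ← PowerSeries.coeff_zero_eq_constantCoeff_apply,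
        hgw, hn0, pow_zero, one_mul]
      exact hwu
    refine ⟨Multiset.replicate k PowerSeries.X, ?_, ?_⟩
    · intro b hb
      rw [Multiset.eq_of_mem_replicate hb]
      exact X_prime_B
    · rw [Multiset.prod_replicate]
      exact ⟨hgu.unit, by rw [IsUnit.unit_spec, ← hfk]⟩
  · obtain ⟨u, P, hu, hgu, hmon, hdeg, heps⟩ := prep g n w hwu hgw hnpos
    obtain ⟨L, hL, hLprod⟩ := MF n P hmon hdeg heps
    refine ⟨Multiset.replicate k PowerSeries.X + L.map phi, ?_, ?_⟩
    · intro b hb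
      rcases Multiset.mem_add.mp hb with h | h
      · rw [Multiset.eq_of_mem_replicate h]
        exact X_prime_B
      · obtain ⟨Qb, hQb, rfl⟩ := Multiset.mem_map.mp h
        obtain ⟨h1, h2, h3, h4⟩ := hL Qb hQb
        exact prime_phi Qb h1 h4 h3 h2
    · rw [Multiset.prod_add, Multiset.prod_replicate]
      have hmap : (L.map phi).prod = phi P := by
        rw [← hLprod]
        exact (map_multiset_prod (phi : Pl →+* B) L).symm
      rw [hmap]
      exact ⟨hu.unit, by rw [IsUnit.unit_spec, hfk, hgu]; ring⟩

lemma finsupp_eq (d : Fin 2 →₀ ℕ) : Finsupp.single 0 (d 0) + Finsupp.single 1 (d 1) = d := by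
  ext k
  fin_cases k <;> simp [Finsupp.single_apply]
def toB (f : R2) : B :=
  PowerSeries.mk fun j => PowerSeries.mk fun i =>
    MvPowerSeries.coeff (Finsupp.single 0 j + Finsupp.single 1 i) f
lemma dc_toB (f : R2) (i j : ℕ) :
    PowerSeries.coeff (R := ℂ) i (PowerSeries.coeff (R := A) j (toB f))
      = MvPowerSeries.coeff (Finsupp.single 0 j + Finsupp.single 1 i) f := by
  simp [toB]

lemma toB_mul (f g : R2) : toB (f * g) = toB f * toB g := by
  apply PowerSeries.ext; intro j
  apply PowerSeries.ext; intro i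
  have hR : PowerSeries.coeff (R := ℂ) i (PowerSeries.coeff (R := A) j (toB f * toB g))
      = ∑ jp ∈ Finset.HasAntidiagonal.antidiagonal j, ∑ ip ∈ Finset.HasAntidiagonal.antidiagonal i,
          MvPowerSeries.coeff (Finsupp.single 0 jp.1 + Finsupp.single 1 ip.1) f *
          MvPowerSeries.coeff (Finsupp.single 0 jp.2 + Finsupp.single 1 ip.2) g := by
    rw [PowerSeries.coeff_mul, map_sum]
    refine Finset.sum_congr rfl fun jp _ => ?_
    rw [PowerSeries.coeff_mul]
    refine Finset.sum_congr rfl fun ip _ => ?_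
    rw [dc_toB, dc_toB]
  rw [dc_toB, hR, MvPowerSeries.coeff_mul, ← Finset.sum_product']
  refine Finset.sum_nbij' (i := fun p => ((p.1 0, p.2 0), (p.1 1, p.2 1)))
    (j := fun q => (Finsupp.single 0 q.1.1 + Finsupp.single 1 q.2.1,
                      Finsupp.single 0 q.1.2 + Finsupp.single 1 q.2.2)) ?_ ?_ ?_ ?_ ?_
  · intro p hp
    rw [Finset.HasAntidiagonal.mem_antidiagonal] at hp
    have h0 := DFunLike.congr_fun hp (0 : Fin 2)
    have h1 := DFunLike.congr_fun hp (1 : Fin 2)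
    simp only [Finsupp.add_apply, Finsupp.single_apply] at h0 h1
    simp only [Finset.mem_product, Finset.HasAntidiagonal.mem_antidiagonal]
    constructor
    · simpa using h0
    · simpa using h1
  · intro q hq
    simp only [Finset.mem_product, Finset.HasAntidiagonal.mem_antidiagonal] at hq
    rw [Finset.HasAntidiagonal.mem_antidiagonal]
    ext k
    fin_cases k <;> simp [Finsupp.single_apply, hq.1, hq.2]
  · intro p hp
    rw [Finset.HasAntidiagonal.mem_antidiagonal] at hp
    refine Prod.ext ?_ ?_ <;>
    · ext k
      fin_cases k <;> simp [Finsupp.single_apply]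
  · intro q hq
    simp [Finsupp.single_apply]
  · intro p hp
    have e1 := finsupp_eq p.1
    have e2 := finsupp_eq p.2
    beta_reduce
    rw [e1, e2]

def ofB (F : B) : R2 := fun d => PowerSeries.coeff (R := ℂ) (d 1) (PowerSeries.coeff (R := A) (d 0) F)

lemma coeff_ofB (F : B) (d : Fin 2 →₀ ℕ) :
    MvPowerSeries.coeff d (ofB F) = PowerSeries.coeff (R := ℂ) (d 1) (PowerSeries.coeff (R := A) (d 0) F) :=
  rfl

lemma toB_ofB (F : B) : toB (ofB F) = F := by
  apply PowerSeries.ext; intro j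
  apply PowerSeries.ext; intro i
  rw [dc_toB, coeff_ofB]
  simp [Finsupp.single_apply]

lemma ofB_toB (f : R2) : ofB (toB f) = f := by
  apply MvPowerSeries.ext; intro d
  rw [coeff_ofB, dc_toB, finsupp_eq]

lemma toB_add (f g : R2) : toB (f + g) = toB f + toB g := by
  apply PowerSeries.ext; intro j
  apply PowerSeries.ext; intro i
  simp [dc_toB, toB]

/-- the ring isomorphism `ℂ[[x,y]] ≃ ℂ⟦y⟧⟦x⟧` -/
def eqv : R2 ≃+* B :=
  { toFun := toB
    invFun := ofB
    left_inv := ofB_toB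
    right_inv := toB_ofB
    map_mul' := toB_mul
    map_add' := toB_add }

instance : IsDomain R2 :=
  Function.Injective.isDomain (eqv : R2 →+* B) eqv.injective

instance : UniqueFactorizationMonoid R2 :=
  MulEquiv.uniqueFactorizationMonoid (eqv.symm.toMulEquiv) ufdB

/-- the key divisibility lemma -/
theorem key_dvd (W0 W1 : R2) (hW : ¬ (W0 = 0 ∧ W1 = 0)) (t : R2)
    (hcop : ∀ f : R2, Irreducible f → f ∣ t → ¬ (f ∣ W0 ∧ f ∣ W1)) :
    ∀ a : R2, t ∣ a * W0 → t ∣ a * W1 → t ∣ a := by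
  induction t using UniqueFactorizationMonoid.induction_on_prime with
  | h₁ =>
    intro a h0 h1
    rw [zero_dvd_iff] at h0 h1
    rcases mul_eq_zero.mp h0 with h | h
    · simp [h]
    · rcases mul_eq_zero.mp h1 with h' | h'
      · simp [h']
      · exact absurd ⟨h, h'⟩ hW
  | h₂ x hx =>
    intro a _ _
    exact hx.dvd
  | h₃ s p hs hp ih =>
    intro a h0 h1
    have hpa : p ∣ a := by
      rcases hp.2.2 a W0 ((dvd_mul_right p s).trans h0) with h | h
      · exact h
      · rcases hp.2.2 a W1 ((dvd_mul_right p s).trans h1) with h' | h'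
        · exact h'
        · exact absurd ⟨h, h'⟩
            (hcop p hp.irreducible (dvd_mul_right p s))
    obtain ⟨a', rfl⟩ := hpa
    have h0' : s ∣ a' * W0 := by
      rw [mul_assoc p a' W0] at h0
      exact (mul_dvd_mul_iff_left hp.ne_zero).mp h0
    have h1' : s ∣ a' * W1 := by
      rw [mul_assoc p a' W1] at h1
      exact (mul_dvd_mul_iff_left hp.ne_zero).mp h1
    have hcop' : ∀ f : R2, Irreducible f → f ∣ s → ¬ (f ∣ W0 ∧ f ∣ W1) := by
      intro f hf hfs
      exact hcop f hf (hfs.mul_left p)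
    exact mul_dvd_mul_left p (ih hcop' a' h0' h1')

end S5

theorem stmt5 (Z W : Fin 2 → R2) (𝔭 : R2) (δ : ℂ)
    -- Y = W/𝔭 is not holomorphic : 𝔭 vanishes at the origin and is nonzero
    (h𝔭0 : MvPowerSeries.constantCoeff 𝔭 = 0) (h𝔭 : 𝔭 ≠ 0)
    -- Y ≠ 0 :
    (hW : ¬ (W 0 = 0 ∧ W 1 = 0))
    -- 𝔭 and W are coprime :
    (hcop : ∀ f : R2, Irreducible f → f ∣ 𝔭 → ¬ (f ∣ W 0 ∧ f ∣ W 1))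
    -- [Z, W/𝔭] = δ·(W/𝔭), denominators cleared: 𝔭·[Z,W] = (δ𝔭 + Z·𝔭)·W :
    (hbrk : ∀ i, 𝔭 * brk Z W i
      = (MvPowerSeries.C δ * 𝔭 + lieD Z 𝔭) * W i) :
    -- {𝔭 = 0} is a separatrix of Z :
    ∃ K : R2, lieD Z 𝔭 = K * 𝔭 := by
  set a : R2 := MvPowerSeries.C δ * 𝔭 + lieD Z 𝔭 with ha
  have h0 : 𝔭 ∣ a * W 0 := ⟨brk Z W 0, (hbrk 0).symm⟩
  have h1 : 𝔭 ∣ a * W 1 := ⟨brk Z W 1, (hbrk 1).symm⟩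
  obtain ⟨c, hc⟩ := S5.key_dvd (W 0) (W 1) hW 𝔭 hcop a h0 h1
  refine ⟨c - MvPowerSeries.C δ, ?_⟩
  have hc' : MvPowerSeries.C δ * 𝔭 + lieD Z 𝔭 = 𝔭 * c := by rw [← ha, hc]
  linear_combination hc'
end
end

section
/- Let Z be a germ of a meromorphic vector field at the origin of ℂ² and define its delta-lattice Δ(Z) := { δ ∈ ℂ : ∃ meromorphic Y with Y ⋔ Z and [Z,Y] = δY }. If (δ,Y) and (δ̃,Ỹ) are two transverse structures of Z with Ỹ = aZ + bY (a, b meromorphic, b ≠ 0), then Z·a = δ̃a, Z·b = (δ̃−δ)b, and for every n ∈ ℤ the pair (δ + n(δ̃−δ), bⁿY) is again a transverse structure; in particular Δ(Z) is an affine ℤ-lattice. -/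
/- Statement 10: delta-lattice of a meromorphic vector field.  The field K of germs of
meromorphic functions carries the (meromorphic) vector fields as ℂ-linear derivations
K → K; transversality Y ⋔ Z is linear independence over K.  If (δ,Y) and (δ̃,Ỹ) are two
transverse structures of Z with Ỹ = a•Z + b•Y (b ≠ 0), then Z·a = δ̃a,
Z·b = (δ̃−δ)b, and for every n ∈ ℤ the pair (δ + n(δ̃−δ), bⁿ•Y) is again a transverse
structure; in particular the delta-lattice Δ(Z) is an affine ℤ-lattice. -/

lemma lie_smul_right10 {K : Type*} [Field K] [Algebra ℂ K]
    (D E : Derivation ℂ K K) (c : K) :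
    ⁅D, c • E⁆ = (D c) • E + c • ⁅D, E⁆ := by
  ext x
  simp only [Derivation.commutator_apply, Derivation.smul_apply, Derivation.add_apply,
    smul_eq_mul, Derivation.leibniz]
  ring

theorem stmt10 {K : Type*} [Field K] [Algebra ℂ K]
    (Z Y Yt : Derivation ℂ K K) (δ δt : ℂ) (a b : K) (hb : b ≠ 0)
    -- (δ, Y) and (δ̃, Ỹ) are transverse structures of Z :
    (hY : ⁅Z, Y⁆ = δ • Y) (hYt : ⁅Z, Yt⁆ = δt • Yt)
    (hZY : LinearIndependent K ![Z, Y])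
    (hZYt : LinearIndependent K ![Z, Yt])
    (hrep : Yt = a • Z + b • Y) :
    Z a = δt • a ∧
    Z b = (δt - δ) • b ∧
    (∀ n : ℤ, ⁅Z, (b ^ n) • Y⁆ = ((δ + (n : ℂ) * (δt - δ))) • ((b ^ n) • Y) ∧
      LinearIndependent K ![Z, (b ^ n) • Y]) ∧
    -- in particular, Δ(Z) is stable under δ ↦ δ + n(δ̃ − δ) :
    (∀ n : ℤ, ∃ Y' : Derivation ℂ K K,
      LinearIndependent K ![Z, Y'] ∧ ⁅Z, Y'⁆ = (δ + (n : ℂ) * (δt - δ)) • Y') := by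
  rw [LinearIndependent.pair_iff] at hZY
  have key : (Z a - δt • a) • Z + (Z b + δ • b - δt • b) • Y = 0 := by
    have h1 : ⁅Z, Yt⁆ = (Z a) • Z + (Z b + δ • b) • Y := by
      rw [hrep, lie_add, lie_smul_right10, lie_smul_right10, lie_self, hY]
      match_scalars <;> simp [Algebra.smul_def] <;> ring
    have h2 : δt • Yt = (δt • a) • Z + (δt • b) • Y := by
      rw [hrep]; match_scalars <;> simp [Algebra.smul_def] <;> ring
    rw [hYt, h2] at h1
    linear_combination (norm := match_scalars <;> simp [Algebra.smul_def] <;> ring) -h1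
  obtain ⟨e1, e2⟩ := hZY _ _ key
  have ha : Z a = δt • a := by linear_combination (norm := module) e1
  have hbeq : Z b = (δt - δ) • b := by
    have : Z b = δt • b - δ • b := by linear_combination (norm := module) e2
    rw [this, sub_smul]
  have hbn : ∀ n : ℤ, Z (b ^ n) = ((n : ℂ) * (δt - δ)) • b ^ n := by
    intro n
    rw [Derivation.leibniz_zpow, hbeq, smul_comm (b ^ (n-1)) ((δt - δ)) b, smul_eq_mul,
      ← zpow_add_one₀ hb, sub_add_cancel, ← Int.cast_smul_eq_zsmul ℂ, smul_smul]
  have main : ∀ n : ℤ, ⁅Z, (b ^ n) • Y⁆ = ((δ + (n : ℂ) * (δt - δ))) • ((b ^ n) • Y) ∧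
      LinearIndependent K ![Z, (b ^ n) • Y] := by
    intro n
    constructor
    · rw [lie_smul_right10, hY, hbn]
      match_scalars <;> simp [Algebra.smul_def] <;> ring
    · rw [LinearIndependent.pair_iff]
      intro s t hst
      rw [smul_smul] at hst
      obtain ⟨h1, h2⟩ := hZY _ _ hst
      exact ⟨h1, by
        rcases mul_eq_zero.1 h2 with h | h
        · exact h
        · exact absurd h (zpow_ne_zero n hb)⟩
  exact ⟨ha, hbeq, main, fun n => ⟨(b ^ n) • Y, (main n).2, (main n).1⟩⟩
end

section
/- Let Z, Y be vector fields with [Z,Y] = DY where Y·D = 0, and let N be a (formal) function with N(0,0)=0. Set 𝒩 := Φ_Y^N (flow of Y for time N). Then 𝒩*Y = Y/(1 + Y·N) and 𝒩*Z = Z − (Z·N + DN)·𝒩*Y, i.e., 𝒩*Z = Z + RY with R = −(Z·N + DN)/(1 + Y·N). -/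
/- Statement 16: let [Z,Y] = D·Y with Y·D = 0, N a function with N(0,0)=0 and
𝒩 := Φ_Y^N (flow of Y for time N(x,y)).  Then 𝒩*Y = Y/(1+Y·N) and
𝒩*Z = Z + R·Y with R = −(Z·N + D·N)/(1 + Y·N).
The flow of Y is abstracted as a map φ with ∂φ/∂t (p,t) = Y(φ(p,t)), φ(p,0) = p;
the pullback identity 𝒩*V = V' is expressed by (d𝒩)_p (V' p) = V(𝒩(p)). -/

open Complex Metric Set

noncomputable section

/-- Lie derivative of a scalar function along a vector field. -/
def lieDA (V : ℂ × ℂ → ℂ × ℂ) (f : ℂ × ℂ → ℂ) (p : ℂ × ℂ) : ℂ :=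
  fderiv ℂ f p (V p)

/-- Lie bracket of vector fields. -/
def brkA (Z Y : ℂ × ℂ → ℂ × ℂ) (p : ℂ × ℂ) : ℂ × ℂ :=
  fderiv ℂ Y p (Z p) - fderiv ℂ Z p (Y p)

/-- The circle-integral kernel for the first derivative at 0, radius 1. -/
def cker (θ : ℝ) : ℂ := (2 * (Real.pi:ℂ))⁻¹ * (circleMap 0 1 θ)⁻¹

lemma norm_cker (θ : ℝ) : ‖cker θ‖ = (2 * Real.pi)⁻¹ := by
  have hζ : ‖circleMap 0 1 θ‖ = 1 := by simp
  simp [cker, norm_mul, norm_inv, map_mul, hζ, Real.pi_nonneg]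

/-- Cauchy representation of the derivative at `0` of an entire function. -/
lemma cauchyRep {E : Type*} [NormedAddCommGroup E] [NormedSpace ℂ E] [CompleteSpace E]
    (g : ℂ → E) (hg : Differentiable ℂ g) :
    deriv g 0 = ∫ θ in (0:ℝ)..(2*Real.pi), cker θ • g (circleMap 0 1 θ) := by
  have hps : HasFPowerSeriesOnBall g (cauchyPowerSeries g 0 1) 0 1 :=
    hg.differentiableOn.hasFPowerSeriesOnBall (R := 1) one_pos
  have hd : deriv g 0 = cauchyPowerSeries g 0 1 1 (fun _ => 1) :=
    hps.hasFPowerSeriesAt.deriv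
  rw [hd, cauchyPowerSeries_apply, circleIntegral, ← intervalIntegral.integral_smul]
  congr 1
  funext θ
  rw [deriv_circleMap]
  have hζ : circleMap 0 1 θ ≠ 0 := by
    simpa using circleMap_ne_center (c := (0:ℂ)) one_ne_zero (θ := θ)
  rw [smul_smul, smul_smul, smul_smul, cker]
  congr 1
  rw [mul_inv, mul_inv]
  simp only [sub_zero, one_div, pow_one]
  calc (2:ℂ)⁻¹ * (↑Real.pi)⁻¹ * I⁻¹ * (circleMap 0 1 θ * I) * (circleMap 0 1 θ)⁻¹ *
        (circleMap 0 1 θ)⁻¹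
      = ((2:ℂ)⁻¹ * (↑Real.pi)⁻¹) * ((I⁻¹ * I) * ((circleMap 0 1 θ * (circleMap 0 1 θ)⁻¹) *
        (circleMap 0 1 θ)⁻¹)) := by ring
    _ = (2:ℂ)⁻¹ * (↑Real.pi)⁻¹ * (circleMap 0 1 θ)⁻¹ := by
        rw [inv_mul_cancel₀ Complex.I_ne_zero, mul_inv_cancel₀ hζ, one_mul, one_mul, mul_assoc]


/-- Cauchy estimate for the first derivative. -/
lemma derivBound {E : Type*} [NormedAddCommGroup E] [NormedSpace ℂ E] [CompleteSpace E]
    (g : ℂ → E) (hg : Differentiable ℂ g) {M : ℝ}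
    (hM : ∀ z ∈ sphere (0:ℂ) 1, ‖g z‖ ≤ M) : ‖deriv g 0‖ ≤ M := by
  rw [cauchyRep g hg]
  have key : ∀ θ ∈ Set.uIoc (0:ℝ) (2*Real.pi), ‖cker θ • g (circleMap 0 1 θ)‖ ≤
      (2*Real.pi)⁻¹ * M := by
    intro θ _
    rw [norm_smul, norm_cker]
    exact mul_le_mul_of_nonneg_left
      (hM _ (circleMap_mem_sphere 0 zero_le_one θ)) (by positivity)
  have := intervalIntegral.norm_integral_le_of_norm_le_const key
  calc ‖∫ θ in (0:ℝ)..(2*Real.pi), cker θ • g (circleMap 0 1 θ)‖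
      ≤ (2*Real.pi)⁻¹ * M * |2*Real.pi - 0| := this
    _ = M := by
        rw [sub_zero, abs_of_pos (by positivity : (0:ℝ) < 2*Real.pi)]
        field_simp

/-- Cauchy estimate for the operator norm of the Fréchet derivative of an entire map. -/
lemma opBound {E F : Type*} [NormedAddCommGroup E] [NormedSpace ℂ E]
    [NormedAddCommGroup F] [NormedSpace ℂ F] [CompleteSpace F]
    (f : E → F) (hf : Differentiable ℂ f) (x : E) {M : ℝ}
    (hM : ∀ y ∈ closedBall x 1, ‖f y‖ ≤ M) : ‖fderiv ℂ f x‖ ≤ M := by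
  have hM0 : 0 ≤ M := le_trans (norm_nonneg _) (hM x (mem_closedBall_self zero_le_one))
  refine ContinuousLinearMap.opNorm_le_bound _ hM0 (fun u => ?_)
  rcases eq_or_ne u 0 with rfl | hu
  · simp [hM0]
  · set e : E := ((‖u‖ : ℂ))⁻¹ • u with he
    have hune : (‖u‖ : ℂ) ≠ 0 := by
      simpa using norm_ne_zero_iff.mpr hu
    have hne : ‖e‖ = 1 := by
      rw [he, norm_smul, norm_inv, Complex.norm_real, norm_norm,
        inv_mul_cancel₀ (norm_ne_zero_iff.mpr hu)]
    have hgd : Differentiable ℂ (fun s : ℂ => f (x + s • e)) :=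
      hf.comp ((differentiable_id.smul_const e).const_add x)
    have hder : HasDerivAt (fun s : ℂ => f (x + s • e)) (fderiv ℂ f x e) 0 := by
      have hin : HasDerivAt (fun s : ℂ => x + s • e) e 0 := by
        simpa using ((hasDerivAt_id (0:ℂ)).smul_const e).const_add x
      have := (hf (x + (0:ℂ) • e)).hasFDerivAt.comp_hasDerivAt 0 hin
      simpa [Function.comp_def] using this
    have hval : ‖fderiv ℂ f x e‖ ≤ M := by
      rw [← hder.deriv]
      refine derivBound _ hgd (fun z hz => ?_)
      refine hM _ ?_
      have : dist (x + z • e) x = 1 := by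
        simp only [dist_eq_norm, add_sub_cancel_left, norm_smul, hne, mul_one]
        simpa using mem_sphere_zero_iff_norm.mp hz
      simp [mem_closedBall, this]
    have hfe : fderiv ℂ f x e = ((‖u‖ : ℂ))⁻¹ • fderiv ℂ f x u := by
      rw [he, map_smul]
    have : ‖fderiv ℂ f x u‖ = ‖u‖ * ‖fderiv ℂ f x e‖ := by
      rw [hfe, norm_smul, norm_inv, Complex.norm_real, norm_norm, ← mul_assoc,
        mul_inv_cancel₀ (norm_ne_zero_iff.mpr hu), one_mul]
    rw [this, mul_comm]
    exact mul_le_mul_of_nonneg_right hval (norm_nonneg u)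


lemma fderivSlice {φ : (ℂ × ℂ) × ℂ → ℂ × ℂ} (hφ : Differentiable ℂ φ) (p v : ℂ × ℂ) (t : ℂ) :
    HasDerivAt (fun s : ℂ => φ (p + s • v, t)) (fderiv ℂ φ (p, t) ((v, 0))) 0 := by
  have h1 : HasDerivAt (fun s : ℂ => p + s • v) v 0 := by
    simpa using ((hasDerivAt_id (0:ℂ)).smul_const v).const_add p
  have hin : HasDerivAt (fun s : ℂ => (p + s • v, t)) ((v, (0:ℂ))) 0 :=
    h1.prodMk (hasDerivAt_const 0 t)
  have h0 : (p + (0:ℂ) • v, t) = (p, t) := by simp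
  have := (hφ (p + (0:ℂ) • v, t)).hasFDerivAt.comp_hasDerivAt 0 hin
  rw [h0] at this
  exact this

lemma sliceDiff {φ : (ℂ × ℂ) × ℂ → ℂ × ℂ} (hφ : Differentiable ℂ φ) (p v : ℂ × ℂ) (t : ℂ) :
    Differentiable ℂ (fun s : ℂ => φ (p + s • v, t)) :=
  hφ.comp (((differentiable_id.smul_const v).const_add p).prodMk (differentiable_const t))

/-- The variational equation for the flow, at the level of directional derivatives in
the space variable, obtained by differentiating the Cauchy integral representation. -/
lemma flowVar {φ : (ℂ × ℂ) × ℂ → ℂ × ℂ} {Y : ℂ × ℂ → ℂ × ℂ}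
    (hφ : Differentiable ℂ φ) (hY : Differentiable ℂ Y)
    (hflow : ∀ p t, HasDerivAt (fun s => φ (p, s)) (Y (φ (p, t))) t)
    (p v : ℂ × ℂ) (t₀ : ℂ) :
    HasDerivAt (fun t => fderiv ℂ φ (p, t) ((v, 0)))
      (fderiv ℂ Y (φ (p, t₀)) (fderiv ℂ φ (p, t₀) ((v, 0)))) t₀ := by
  -- rewrite target function as an interval integral
  have hrep : ∀ t : ℂ, fderiv ℂ φ (p, t) ((v, 0)) =
      ∫ θ in (0:ℝ)..(2*Real.pi), cker θ • φ (p + circleMap 0 1 θ • v, t) := by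
    intro t
    rw [← (fderivSlice hφ p v t).deriv]
    exact cauchyRep _ (sliceDiff hφ p v t)
  have cont_cker : Continuous cker := by
    refine continuous_const.mul (Continuous.inv₀ (continuous_circleMap 0 1) (fun θ => ?_))
    simpa using circleMap_ne_center (c := (0:ℂ)) one_ne_zero (θ := θ)
  set F : ℂ → ℝ → (ℂ × ℂ) := fun t θ => cker θ • φ (p + circleMap 0 1 θ • v, t) with hF
  set F' : ℂ → ℝ → (ℂ × ℂ) := fun t θ => cker θ • Y (φ (p + circleMap 0 1 θ • v, t)) with hF'
  have contF : ∀ t, Continuous (F t) := fun t =>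
    cont_cker.smul (hφ.continuous.comp ((continuous_const.add
      ((continuous_circleMap 0 1).smul continuous_const)).prodMk continuous_const))
  have contF' : ∀ t, Continuous (F' t) := fun t =>
    cont_cker.smul (hY.continuous.comp (hφ.continuous.comp ((continuous_const.add
      ((continuous_circleMap 0 1).smul continuous_const)).prodMk continuous_const)))
  -- bound for the t-derivative of the integrand
  obtain ⟨M, hM⟩ : ∃ M, ∀ x ∈ (sphere (0:ℂ) 1) ×ˢ (closedBall t₀ 1),
      ‖Y (φ (p + x.1 • v, x.2))‖ ≤ M := by
    refine ((isCompact_sphere (0:ℂ) 1).prod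
      (isCompact_closedBall t₀ 1)).exists_bound_of_continuousOn ?_
    exact (hY.continuous.comp (hφ.continuous.comp ((continuous_const.add
      (continuous_fst.smul continuous_const)).prodMk continuous_snd))).continuousOn
  have key := intervalIntegral.hasDerivAt_integral_of_dominated_loc_of_deriv_le
    (𝕜 := ℂ) (μ := MeasureTheory.volume) (F := F) (F' := F') (x₀ := t₀)
    (a := 0) (b := 2*Real.pi) (bound := fun _ => (2*Real.pi)⁻¹ * M) (s := ball t₀ 1) (ball_mem_nhds t₀ one_pos)
    (Filter.Eventually.of_forall (fun t => (contF t).aestronglyMeasurable))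
    ((contF t₀).intervalIntegrable _ _)
    ((contF' t₀).aestronglyMeasurable)
    (MeasureTheory.ae_of_all _ (fun θ _ x hx => by
      rw [hF']
      simp only
      rw [norm_smul, norm_cker]
      refine mul_le_mul_of_nonneg_left ?_ (by positivity)
      exact hM (circleMap 0 1 θ, x)
        ⟨circleMap_mem_sphere 0 zero_le_one θ, ball_subset_closedBall hx⟩))
    intervalIntegrable_const
    (MeasureTheory.ae_of_all _ (fun θ _ x _ =>
      (hflow (p + circleMap 0 1 θ • v) x).const_smul (cker θ)))
  have main := key.2
  have heq : (fun t : ℂ => fderiv ℂ φ (p, t) ((v,0))) =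
      fun t => ∫ θ in (0:ℝ)..(2*Real.pi), F t θ := funext hrep
  rw [heq]
  have hYd : Differentiable ℂ (fun s : ℂ => Y (φ (p + s • v, t₀))) :=
    hY.comp (sliceDiff hφ p v t₀)
  have hchain : HasDerivAt (fun s : ℂ => Y (φ (p + s • v, t₀)))
      (fderiv ℂ Y (φ (p, t₀)) (fderiv ℂ φ (p, t₀) ((v, 0)))) 0 := by
    have h0 : (p + (0:ℂ) • v, t₀) = (p, t₀) := by simp
    have := (hY (φ (p + (0:ℂ) • v, t₀))).hasFDerivAt.comp_hasDerivAt 0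
      (fderivSlice hφ p v t₀)
    rwa [h0] at this
  have hval : fderiv ℂ Y (φ (p, t₀)) (fderiv ℂ φ (p, t₀) ((v, 0))) =
      ∫ θ in (0:ℝ)..(2*Real.pi), F' t₀ θ := by
    rw [← hchain.deriv, cauchyRep _ hYd]
  rw [hval]
  exact main


/-- Uniqueness for a linear ODE over complex time, via Grönwall on the real ray
plus the identity theorem. -/
lemma odeUnique {E : Type*} [NormedAddCommGroup E] [NormedSpace ℂ E] [CompleteSpace E]
    (A : ℂ → E →L[ℂ] E) (w u : ℂ → E) {K : ℝ} (hK0 : 0 ≤ K)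
    (hbd : ∀ s : ℝ, s ∈ Icc (0:ℝ) 1 → ‖A s‖ ≤ K)
    (hw : ∀ t, HasDerivAt w (A t (w t)) t)
    (hu : ∀ t, HasDerivAt u (A t (u t)) t)
    (h0 : w 0 = u 0) : ∀ t, w t = u t := by
  have dw : Differentiable ℂ w := fun t => (hw t).differentiableAt
  have du : Differentiable ℂ u := fun t => (hu t).differentiableAt
  -- restrictions to the real axis
  have hof : ∀ x : ℝ, HasDerivAt (fun y : ℝ => (y:ℂ)) 1 x := fun x => by
    simpa using (hasDerivAt_id x).ofReal_comp
  have hwr : ∀ x : ℝ, HasDerivAt (fun y : ℝ => w y) (A x (w x)) x := fun x => by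
    simpa [Function.comp_def] using HasDerivAt.scomp x (hw x) (hof x)
  have hur : ∀ x : ℝ, HasDerivAt (fun y : ℝ => u y) (A x (u x)) x := fun x => by
    simpa [Function.comp_def] using HasDerivAt.scomp x (hu x) (hof x)
  -- the time-dependent vector field, cut off outside [0,1]
  set vv : ℝ → E → E := fun x y => if x ∈ Icc (0:ℝ) 1 then A x y else 0 with hvv
  have hlip : ∀ x : ℝ, LipschitzOnWith K.toNNReal (vv x) univ := by
    intro x
    rw [hvv]
    by_cases hx : x ∈ Icc (0:ℝ) 1
    · simp only [hx, if_true]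
      refine ((A x).lipschitz.weaken ?_).lipschitzOnWith
      rw [← NNReal.coe_le_coe]
      simpa [Real.coe_toNNReal _ hK0] using hbd x hx
    · simp only [hx, if_false]
      exact (LipschitzWith.const' 0).weaken zero_le |>.lipschitzOnWith
  have heq : EqOn (fun y : ℝ => w y) (fun y : ℝ => u y) (Icc 0 1) := by
    refine ODE_solution_unique_of_mem_Icc_right (fun t _ => hlip t)
      ((dw.continuous.comp continuous_ofReal).continuousOn) (fun x hx => ?_)
      (fun x _ => mem_univ _)
      ((du.continuous.comp continuous_ofReal).continuousOn) (fun x hx => ?_)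
      (fun x _ => mem_univ _) (by simpa using h0)
    · have : vv x ((fun y : ℝ => w y) x) = A x (w x) := by
        rw [hvv]; simp [Ico_subset_Icc_self hx]
      rw [this]
      exact (hwr x).hasDerivWithinAt
    · have : vv x ((fun y : ℝ => u y) x) = A x (u x) := by
        rw [hvv]; simp [Ico_subset_Icc_self hx]
      rw [this]
      exact (hur x).hasDerivWithinAt
  -- pass to the complex plane by the identity theorem
  have han : AnalyticOnNhd ℂ (fun z => w z - u z) univ :=
    fun z _ => ((dw.sub du).analyticAt z)
  have hfreq : ∃ᶠ z in nhdsWithin (0:ℂ) {z | z ≠ 0}, w z - u z = 0 := by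
    have htend : Filter.Tendsto (fun n : ℕ => ((((n:ℝ)+1)⁻¹ : ℝ) : ℂ)) Filter.atTop
        (nhdsWithin (0:ℂ) {z | z ≠ 0}) := by
      refine tendsto_nhdsWithin_iff.mpr ⟨?_, ?_⟩
      · have : Filter.Tendsto (fun n : ℕ => (((n:ℝ)+1)⁻¹ : ℝ)) Filter.atTop (nhds 0) :=
          tendsto_one_div_add_atTop_nhds_zero_nat |>.congr (by intro n; rw [one_div])
        exact (Complex.continuous_ofReal.tendsto 0).comp this
      · refine Filter.Eventually.of_forall (fun n => ?_)
        simp only [Set.mem_setOf_eq, ne_eq, Complex.ofReal_eq_zero]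
        positivity
    refine htend.frequently (Filter.Frequently.of_forall (fun n => ?_))
    have hmem : (((n:ℝ)+1)⁻¹ : ℝ) ∈ Icc (0:ℝ) 1 := by
      constructor
      · positivity
      · rw [inv_le_one_iff₀]; right; linarith [Nat.cast_nonneg (α := ℝ) n]
    have := heq hmem
    simpa [sub_eq_zero] using this
  have hzero : EqOn (fun z => w z - u z) 0 univ :=
    han.eqOn_zero_of_preconnected_of_frequently_eq_zero isPreconnected_univ (mem_univ 0) hfreq
  intro t
  have := hzero (mem_univ t)
  simpa [sub_eq_zero] using this


theorem stmt16 (Z Y : ℂ × ℂ → ℂ × ℂ) (D N : ℂ × ℂ → ℂ)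
    (φ : (ℂ × ℂ) × ℂ → ℂ × ℂ)
    (hZ : Differentiable ℂ Z) (hY : Differentiable ℂ Y)
    (hD : Differentiable ℂ D) (hN : Differentiable ℂ N)
    (hφ : Differentiable ℂ φ)
    -- φ is the flow of Y :
    (hφ0 : ∀ p, φ (p, 0) = p)
    (hflow : ∀ p t, HasDerivAt (fun s => φ (p, s)) (Y (φ (p, t))) t)
    -- [Z,Y] = D·Y and Y·D = 0 :
    (hbrk : ∀ p, brkA Z Y p = D p • Y p)
    (hYD : ∀ p, lieDA Y D p = 0)
    (hN0 : N 0 = 0)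
    (p : ℂ × ℂ) (hp : 1 + lieDA Y N p ≠ 0) :
    -- 𝒩*Y = Y/(1+Y·N) :
    fderiv ℂ (fun q => φ (q, N q)) p ((1 + lieDA Y N p)⁻¹ • Y p)
      = Y (φ (p, N p)) ∧
    -- 𝒩*Z = Z + R·Y with R = −(Z·N + D·N)/(1 + Y·N) :
    fderiv ℂ (fun q => φ (q, N q)) p
        (Z p + (-(lieDA Z N p + D p * N p) / (1 + lieDA Y N p)) • Y p)
      = Z (φ (p, N p)) := by
  classical
  set A : ℂ → (ℂ × ℂ) →L[ℂ] (ℂ × ℂ) := fun t => fderiv ℂ Y (φ (p, t)) with hA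
  -- uniform bound for `A` on the real interval [0,1]
  have hcont_o : Continuous (fun s : ℝ => φ (p, (s:ℂ))) :=
    hφ.continuous.comp (continuous_const.prodMk Complex.continuous_ofReal)
  obtain ⟨M, hM⟩ := ((isCompact_Icc.image hcont_o).cthickening
    (r := 1)).exists_bound_of_continuousOn hY.continuous.continuousOn
  have hK0 : (0:ℝ) ≤ max M 0 := le_max_right M 0
  have hbd : ∀ s : ℝ, s ∈ Icc (0:ℝ) 1 → ‖A s‖ ≤ max M 0 := by
    intro s hs
    refine opBound Y hY _ (fun y hy => le_trans (hM y ?_) (le_max_left M 0))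
    exact closedBall_subset_cthickening (mem_image_of_mem _ hs) 1 hy
  -- D is constant along the orbit of p
  have hDconst : ∀ t : ℂ, D (φ (p, t)) = D p := by
    have hk : ∀ t : ℂ, HasDerivAt (fun t => D (φ (p, t))) 0 t := by
      intro t
      have h1 := (hD (φ (p,t))).hasFDerivAt.comp_hasDerivAt t (hflow p t)
      have h0 : fderiv ℂ D (φ (p,t)) (Y (φ (p,t))) = 0 := hYD (φ (p,t))
      rwa [h0] at h1
    have hDdiff : Differentiable ℂ (fun t : ℂ => D (φ (p, t))) :=
      fun t => (hk t).differentiableAt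
    have hf0 : ∀ t, fderiv ℂ (fun t : ℂ => D (φ (p,t))) t = 0 := by
      intro t
      rw [← toSpanSingleton_deriv, (hk t).deriv]
      ext
      simp
    intro t
    have := is_const_of_fderiv_eq_zero (𝕜 := ℂ) hDdiff hf0 t 0
    simpa [hφ0] using this
  -- the pulled-back vector fields solve the variational ODE
  have hwY' : ∀ t, HasDerivAt (fun t => fderiv ℂ φ (p,t) ((Y p, 0)))
      (A t (fderiv ℂ φ (p,t) ((Y p, 0)))) t := fun t => flowVar hφ hY hflow p (Y p) t
  have hwZ' : ∀ t, HasDerivAt (fun t => fderiv ℂ φ (p,t) ((Z p, 0)))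
      (A t (fderiv ℂ φ (p,t) ((Z p, 0)))) t := fun t => flowVar hφ hY hflow p (Z p) t
  have huY' : ∀ t, HasDerivAt (fun t => Y (φ (p, t))) (A t (Y (φ (p, t)))) t :=
    fun t => (hY (φ (p,t))).hasFDerivAt.comp_hasDerivAt t (hflow p t)
  have huZ' : ∀ t : ℂ, HasDerivAt (fun t : ℂ => Z (φ (p,t)) + (t * D p) • Y (φ (p,t)))
      (A t (Z (φ (p,t)) + (t * D p) • Y (φ (p,t)))) t := by
    intro t
    have hZc : HasDerivAt (fun t => Z (φ (p,t))) (fderiv ℂ Z (φ (p,t)) (Y (φ (p,t)))) t :=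
      (hZ (φ (p,t))).hasFDerivAt.comp_hasDerivAt t (hflow p t)
    have hty : HasDerivAt (fun t : ℂ => t * D p) (D p) t := by
      simpa using (hasDerivAt_id t).mul_const (D p)
    have hprod : HasDerivAt (fun t : ℂ => (t * D p) • Y (φ (p,t)))
        ((t * D p) • (A t (Y (φ (p,t)))) + D p • Y (φ (p,t))) t := hty.smul (huY' t)
    have hsum := hZc.add hprod
    have hAZ : A t (Z (φ (p,t))) =
        fderiv ℂ Z (φ (p,t)) (Y (φ (p,t))) + D p • Y (φ (p,t)) := by
      have hbr : fderiv ℂ Y (φ (p,t)) (Z (φ (p,t))) - fderiv ℂ Z (φ (p,t)) (Y (φ (p,t)))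
          = D p • Y (φ (p,t)) := by
        have := hbrk (φ (p,t))
        rw [brkA] at this
        rw [this, hDconst t]
      have := sub_eq_iff_eq_add.mp hbr
      rw [hA]
      rw [this]
      abel
    have hval : A t (Z (φ (p,t)) + (t * D p) • Y (φ (p,t))) =
        fderiv ℂ Z (φ (p,t)) (Y (φ (p,t))) +
          ((t * D p) • (A t (Y (φ (p,t)))) + D p • Y (φ (p,t))) := by
      rw [map_add, map_smul, hAZ]
      abel
    rw [hval]
    exact hsum
  -- initial values
  have hwY0 : fderiv ℂ φ (p, 0) ((Y p, 0)) = Y p := by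
    have h2 : HasDerivAt (fun s : ℂ => φ (p + s • Y p, 0)) (Y p) 0 := by
      have he : (fun s : ℂ => φ (p + s • Y p, 0)) = fun s : ℂ => p + s • Y p :=
        funext fun s => hφ0 _
      rw [he]
      simpa using ((hasDerivAt_id (0:ℂ)).smul_const (Y p)).const_add p
    exact (fderivSlice hφ p (Y p) 0).unique h2
  have hwZ0 : fderiv ℂ φ (p, 0) ((Z p, 0)) = Z p := by
    have h2 : HasDerivAt (fun s : ℂ => φ (p + s • Z p, 0)) (Z p) 0 := by
      have he : (fun s : ℂ => φ (p + s • Z p, 0)) = fun s : ℂ => p + s • Z p :=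
        funext fun s => hφ0 _
      rw [he]
      simpa using ((hasDerivAt_id (0:ℂ)).smul_const (Z p)).const_add p
    exact (fderivSlice hφ p (Z p) 0).unique h2
  -- uniqueness of the two ODE solutions
  have hYeq : ∀ t, fderiv ℂ φ (p,t) ((Y p, 0)) = Y (φ (p, t)) :=
    odeUnique A _ _ hK0 hbd hwY' huY' (by rw [hwY0, hφ0])
  have hZeq : ∀ t : ℂ, fderiv ℂ φ (p,t) ((Z p, 0)) =
      Z (φ (p,t)) + (t * D p) • Y (φ (p,t)) :=
    odeUnique A _ _ hK0 hbd hwZ' huZ' (by rw [hwZ0, hφ0]; simp)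
  -- the derivative of q ↦ φ (q, N q)
  have hNfd : HasFDerivAt (fun q => φ (q, N q))
      ((fderiv ℂ φ (p, N p)).comp
        ((ContinuousLinearMap.id ℂ (ℂ × ℂ)).prod (fderiv ℂ N p))) p :=
    (hφ (p, N p)).hasFDerivAt.comp p ((hasFDerivAt_id p).prodMk (hN p).hasFDerivAt)
  have htime : fderiv ℂ φ (p, N p) (((0 : ℂ × ℂ), (1:ℂ))) = Y (φ (p, N p)) := by
    have hcurve : HasDerivAt (fun s : ℂ => (p, s)) (((0 : ℂ × ℂ), (1:ℂ))) (N p) :=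
      (hasDerivAt_const (N p) p).prodMk (hasDerivAt_id (N p))
    have h2 := (hφ (p, N p)).hasFDerivAt.comp_hasDerivAt (N p) hcurve
    exact h2.unique (hflow p (N p))
  have happ : ∀ x : ℂ × ℂ, fderiv ℂ (fun q => φ (q, N q)) p x =
      fderiv ℂ φ (p, N p) ((x, 0)) + (fderiv ℂ N p x) • Y (φ (p, N p)) := by
    intro x
    rw [hNfd.fderiv]
    have hsplit : ((x, fderiv ℂ N p x) : (ℂ × ℂ) × ℂ) =
        (x, 0) + (fderiv ℂ N p x) • (((0 : ℂ × ℂ), (1:ℂ))) := by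
      simp [Prod.ext_iff]
    calc ((fderiv ℂ φ (p, N p)).comp
          ((ContinuousLinearMap.id ℂ (ℂ × ℂ)).prod (fderiv ℂ N p))) x
        = fderiv ℂ φ (p, N p) ((x, fderiv ℂ N p x)) := rfl
      _ = fderiv ℂ φ (p, N p) ((x, 0)) + (fderiv ℂ N p x) • Y (φ (p, N p)) := by
          rw [hsplit, map_add, map_smul, htime]
  have ha : lieDA Y N p = fderiv ℂ N p (Y p) := rfl
  have hb : lieDA Z N p = fderiv ℂ N p (Z p) := rfl
  set a := fderiv ℂ N p (Y p) with haa
  set b := fderiv ℂ N p (Z p) with hbb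
  rw [ha] at hp
  constructor
  · rw [ha, happ]
    have hsm : (((1 + a)⁻¹ • Y p, (0:ℂ)) : (ℂ × ℂ) × ℂ) = (1 + a)⁻¹ • ((Y p, 0)) := by
      simp [Prod.ext_iff]
    rw [hsm, map_smul, hYeq (N p), map_smul, haa.symm]
    rw [smul_eq_mul, ← add_smul]
    have hc : (1 + a)⁻¹ + (1 + a)⁻¹ * a = 1 := by
      field_simp
    rw [hc, one_smul]
  · rw [ha, hb, happ]
    set R : ℂ := -(b + D p * N p) / (1 + a) with hR
    have hsm : ((Z p + R • Y p, (0:ℂ)) : (ℂ × ℂ) × ℂ) = (Z p, 0) + R • ((Y p, 0)) := by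
      simp [Prod.ext_iff]
    rw [hsm, map_add, map_smul, hYeq (N p), hZeq (N p), map_add, map_smul, haa.symm, hbb.symm]
    have hcoef : N p * D p + (R + (b + R * a)) = 0 := by
      have h1 : R * (1 + a) = -(b + D p * N p) := by
        rw [hR]; field_simp
      linear_combination h1
    rw [smul_eq_mul]
    match_scalars
    · ring
    · linear_combination hcoef
end
end

section
/- Let Z, Y be vector fields with [Z,Y] = δY, δ ∈ ℂ constant, and Z ⋔ Y, and let T be a (formal) function with T(0,0)=0 and (Z·T)(0,0) ≠ −1. Set 𝒯 := Φ_Z^T. Then 𝒯*Z = Z/(1 + Z·T) and 𝒯*Y = e^{δT}(Y − (Y·T)·𝒯*Z). -/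
/- Statement 17: let [Z,Y] = δY (δ ∈ ℂ constant), Z ⋔ Y, T a function with T(0,0)=0 and
(Z·T)(0,0) ≠ −1, and 𝒯 := Φ_Z^T (flow of Z for time T(x,y)).  Then
𝒯*Z = Z/(1+Z·T) and 𝒯*Y = e^{δT}(Y − (Y·T)·𝒯*Z).
The flow of Z is abstracted as a map ψ with ∂ψ/∂t(p,t) = Z(ψ(p,t)), ψ(p,0) = p; the
pullback identity 𝒯*V = V' is expressed by (d𝒯)_p(V' p) = V(𝒯(p)), at points p where
1 + (Z·T)(p) ≠ 0 and Z, Y are transverse. -/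

noncomputable section

open Complex Metric Set Real intervalIntegral

/-- E-valued version of `HasDerivAt.comp_ofReal`. -/
lemma hasDerivAt_comp_ofReal17 {E : Type*} [NormedAddCommGroup E] [NormedSpace ℂ E]
    {f : ℂ → E} {f' : E} {z : ℝ} (hf : HasDerivAt f f' z) :
    HasDerivAt (fun s : ℝ => f s) f' z := by
  simpa [Function.comp_def] using (hf.hasFDerivAt.restrictScalars ℝ).comp_hasDerivAt z Complex.ofRealCLM.hasDerivAt

/-- Bound on fderiv of an entire function on a compact set, via Cauchy estimates. -/
lemma fderiv_bound17 {f : ℂ × ℂ → ℂ × ℂ} (hf : Differentiable ℂ f) {C : Set (ℂ × ℂ)}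
    (hC : IsCompact C) :
    ∃ M : ℝ, 0 ≤ M ∧ ∀ q ∈ C, ∀ v, ‖fderiv ℂ f q v‖ ≤ M * ‖v‖ := by
  obtain ⟨M0, hM0⟩ := (hC.cthickening (r := 1)).exists_bound_of_continuousOn
    hf.continuous.continuousOn
  refine ⟨max M0 0, le_max_right _ _, fun q hq v => ?_⟩
  rcases eq_or_ne v 0 with rfl | hv
  · simp
  have hnv : (0:ℝ) < ‖v‖ := norm_pos_iff.2 hv
  set u : ℂ × ℂ := ((‖v‖ : ℂ))⁻¹ • v with hu
  have hun : ‖u‖ = 1 := by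
    rw [hu, norm_smul]
    simp [norm_inv, hnv.ne', Complex.norm_real, abs_of_pos hnv, inv_mul_cancel₀ hnv.ne']
  -- the entire curve z ↦ f (q + z • u)
  have hg : Differentiable ℂ (fun z : ℂ => f (q + z • u)) := by
    apply hf.comp
    exact (differentiable_const q).add (differentiable_id.smul_const u)
  have hder : HasDerivAt (fun z : ℂ => f (q + z • u)) (fderiv ℂ f q u) 0 := by
    have h1 : HasDerivAt (fun z : ℂ => q + z • u) u 0 := by
      simpa using ((hasDerivAt_id (0:ℂ)).smul_const u).const_add q
    have h2 : HasFDerivAt f (fderiv ℂ f q) (q + (0:ℂ) • u) := by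
      simpa using (hf q).hasFDerivAt
    simpa [Function.comp_def] using h2.comp_hasDerivAt 0 h1
  have hcau : ‖deriv (fun z : ℂ => f (q + z • u)) 0‖ ≤ max M0 0 / 1 := by
    apply Complex.norm_deriv_le_of_forall_mem_sphere_norm_le one_pos hg.diffContOnCl
    intro z hz
    have hz1 : ‖z‖ = 1 := by simpa using hz
    have hmem : q + z • u ∈ Metric.cthickening 1 C := by
      apply Metric.mem_cthickening_of_dist_le _ _ _ _ hq
      simp [dist_eq_norm, norm_smul, hz1, hun]
    exact le_trans (hM0 _ hmem) (le_max_left _ _)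
  rw [hder.deriv] at hcau
  have : fderiv ℂ f q v = (‖v‖ : ℂ) • fderiv ℂ f q u := by
    rw [← map_smul, hu, smul_smul, mul_inv_cancel₀ (by exact_mod_cast hnv.ne'), one_smul]
  rw [this, norm_smul]
  simp only [Complex.norm_real, Real.norm_eq_abs, abs_of_pos hnv]
  rw [mul_comm]
  exact mul_le_mul_of_nonneg_right (by simpa using hcau) hnv.le

/-- Cauchy kernel applied to a parametrized family. -/
def kern17 (H : ℂ → ℂ → ℂ × ℂ) (s : ℂ) (θ : ℝ) : ℂ × ℂ :=
  deriv (circleMap 0 1) θ • ((circleMap 0 1 θ) ^ (-2 : ℤ) • H (circleMap 0 1 θ) s)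

lemma kern17_norm (H : ℂ → ℂ → ℂ × ℂ) (s : ℂ) (θ : ℝ) :
    ‖kern17 H s θ‖ = ‖H (circleMap 0 1 θ) s‖ := by
  have hn1 : ‖circleMap 0 1 θ‖ = 1 := by simpa using norm_circleMap_zero 1 θ
  rw [kern17, norm_smul, norm_smul, deriv_circleMap, norm_mul, Complex.norm_I, norm_zpow, hn1]
  norm_num

lemma kern17_cont {H : ℂ → ℂ → ℂ × ℂ} (hH : Continuous (fun q : ℂ × ℂ => H q.1 q.2)) (s : ℂ) :
    Continuous (fun θ => kern17 H s θ) := by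
  have hcm0 : ∀ θ : ℝ, circleMap 0 1 θ ≠ 0 := fun θ => by
    have h := norm_circleMap_zero 1 θ
    intro hc; rw [hc] at h; simp at h
  unfold kern17
  have h1 : Continuous (deriv (circleMap 0 1)) := by
    have : deriv (circleMap (0:ℂ) 1) = fun θ => circleMap 0 1 θ * I :=
      funext fun θ => deriv_circleMap 0 1 θ
    rw [this]; exact (continuous_circleMap 0 1).mul continuous_const
  have h2 : Continuous (fun θ => (circleMap 0 1 θ) ^ (-2 : ℤ)) := by
    have : (fun θ => (circleMap 0 1 θ) ^ (-2 : ℤ)) = fun θ => ((circleMap 0 1 θ) ^ (2:ℕ))⁻¹ :=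
      funext fun θ => by rw [zpow_neg]; norm_cast
    rw [this]
    exact ((continuous_circleMap 0 1).pow 2).inv₀ fun θ => pow_ne_zero 2 (hcm0 θ)
  exact h1.smul (h2.smul (hH.comp ((continuous_circleMap 0 1).prodMk continuous_const)))

/-- Cauchy representation of the z-derivative at 0 as an interval integral. -/
lemma cauchy_rep17 {f : ℂ → ℂ × ℂ} (hf : Differentiable ℂ f) {H : ℂ → ℂ → ℂ × ℂ} {s : ℂ}
    (hfH : ∀ z, f z = H z s) :
    deriv f 0 = (2 * π * I : ℂ)⁻¹ • ∫ θ in (0:ℝ)..(2 * π), kern17 H s θ := by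
  have h := (hf.diffContOnCl (s := ball (0:ℂ) 1)).deriv_eq_smul_circleIntegral one_pos
  have hne : (2 * π * I : ℂ) ≠ 0 := by simp [Real.pi_ne_zero, I_ne_zero]
  rw [eq_inv_smul_iff₀ hne, ← h]
  simp only [circleIntegral, sub_zero, kern17, hfH, one_div, zpow_neg, zpow_ofNat]

/-- Differentiation under the parameter of a family of z-derivatives at 0. -/
lemma param_deriv17 {F G : ℂ → ℂ → ℂ × ℂ}
    (hF : Differentiable ℂ (fun q : ℂ × ℂ => F q.1 q.2))
    (hG : Differentiable ℂ (fun q : ℂ × ℂ => G q.1 q.2))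
    (hFt : ∀ z t, HasDerivAt (F z) (G z t) t) (t : ℂ) :
    HasDerivAt (fun s => deriv (fun z => F z s) 0) (deriv (fun z => G z t) 0) t := by
  have hFz : ∀ s, Differentiable ℂ (fun z => F z s) := fun s =>
    hF.comp (differentiable_id.prodMk (differentiable_const s))
  have hGz : ∀ s, Differentiable ℂ (fun z => G z s) := fun s =>
    hG.comp (differentiable_id.prodMk (differentiable_const s))
  obtain ⟨C, hC⟩ := ((isCompact_sphere (0:ℂ) 1).prod (isCompact_closedBall t 1)
    ).exists_bound_of_continuousOn hG.continuous.continuousOn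
  have hbound : ∀ θ : ℝ, θ ∈ Set.uIoc (0:ℝ) (2*π) → ∀ x ∈ ball t 1, ‖kern17 G x θ‖ ≤ |C| := by
    intro θ _ x hx
    rw [kern17_norm]
    refine le_trans (hC (circleMap 0 1 θ, x) ?_) (le_abs_self C)
    exact ⟨circleMap_mem_sphere _ zero_le_one _, ball_subset_closedBall hx⟩
  have hdiff : ∀ θ : ℝ, θ ∈ Set.uIoc (0:ℝ) (2*π) → ∀ x ∈ ball t 1,
      HasDerivAt (fun s => kern17 F s θ) (kern17 G x θ) x := by
    intro θ _ x _
    exact ((hFt (circleMap 0 1 θ) x).const_smul ((circleMap 0 1 θ) ^ (-2 : ℤ))).const_smul (deriv (circleMap 0 1) θ)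
  have key := intervalIntegral.hasDerivAt_integral_of_dominated_loc_of_deriv_le
    (μ := MeasureTheory.volume) (a := 0) (b := 2 * π) (F := fun s θ => kern17 F s θ)
    (F' := fun s θ => kern17 G s θ) (x₀ := t) (bound := fun _ => |C|) (s := ball t 1) (ball_mem_nhds t one_pos)
    (Filter.Eventually.of_forall (fun s => (kern17_cont hF.continuous s).aestronglyMeasurable))
    ((kern17_cont hF.continuous t).intervalIntegrable _ _)
    ((kern17_cont hG.continuous t).aestronglyMeasurable)
    (MeasureTheory.ae_of_all _ hbound) intervalIntegrable_const
    (MeasureTheory.ae_of_all _ hdiff)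
  have h1 : ∀ s : ℂ, (2 * π * I : ℂ)⁻¹ • (∫ θ in (0:ℝ)..(2 * π), kern17 F s θ)
      = deriv (fun z => F z s) 0 := fun s => (cauchy_rep17 (hFz s) (fun _ => rfl)).symm
  have h3 : HasDerivAt (fun s => deriv (fun z => F z s) 0)
      ((2 * π * I : ℂ)⁻¹ • ∫ θ in (0:ℝ)..(2 * π), kern17 G t θ) t :=
    HasDerivAt.congr_of_eventuallyEq (key.2.const_smul ((2 * π * I : ℂ)⁻¹))
      (Filter.Eventually.of_forall fun s => (h1 s).symm)
  rwa [show ((2 * π * I : ℂ)⁻¹ • ∫ θ in (0:ℝ)..(2 * π), kern17 G t θ)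
      = deriv (fun z => G z t) 0 from (cauchy_rep17 (hGz t) (fun _ => rfl)).symm] at h3

/-- Uniqueness for the linear ODE `W' = (DZ)(q t) W` along a continuous curve, for entire
solutions, at an arbitrary complex time. -/
lemma ode_uniq17 {Z : ℂ × ℂ → ℂ × ℂ} (hZ : Differentiable ℂ Z) {q W V : ℂ → ℂ × ℂ}
    (hq : Continuous q)
    (hW : ∀ t, HasDerivAt W (fderiv ℂ Z (q t) (W t)) t)
    (hV : ∀ t, HasDerivAt V (fderiv ℂ Z (q t) (V t)) t)
    (h0 : W 0 = V 0) (t₀ : ℂ) : W t₀ = V t₀ := by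
  have hWd : Differentiable ℂ W := fun t => (hW t).differentiableAt
  have hVd : Differentiable ℂ V := fun t => (hV t).differentiableAt
  have hqc : Continuous fun s : ℝ => q s := hq.comp Complex.continuous_ofReal
  obtain ⟨M, hM0, hM⟩ := fderiv_bound17 hZ (isCompact_Icc.image hqc)
    (C := (fun s : ℝ => q s) '' Icc (-1) 1)
  set v : ℝ → ℂ × ℂ → ℂ × ℂ := fun s x =>
    if s ∈ Icc (-1:ℝ) 1 then fderiv ℂ Z (q s) x else 0 with hv
  have hlip : ∀ s, LipschitzOnWith M.toNNReal (v s) univ := by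
    intro s
    rw [lipschitzOnWith_iff_dist_le_mul]
    intro x _ y _
    by_cases hs : s ∈ Icc (-1:ℝ) 1
    · simp only [hv, hs, if_pos]
      rw [dist_eq_norm, dist_eq_norm, ← map_sub, Real.coe_toNNReal M hM0]
      exact hM (q s) ⟨s, hs, rfl⟩ (x - y)
    · simp only [hv, hs, if_neg, not_false_iff, dist_self]
      positivity
  have heqR : EqOn (fun s : ℝ => W s) (fun s : ℝ => V s) (Icc (-1) 1) := by
    apply ODE_solution_unique_of_mem_Icc (fun s _ => hlip s)
      (show (0:ℝ) ∈ Ioo (-1:ℝ) 1 by norm_num)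
    · exact (hWd.continuous.comp Complex.continuous_ofReal).continuousOn
    · intro s hs
      have h : v s ((fun s : ℝ => W s) s) = fderiv ℂ Z (q s) (W s) := by
        simp only [hv]; rw [if_pos (Ioo_subset_Icc_self hs)]
      rw [h]
      exact hasDerivAt_comp_ofReal17 (hW s)
    · exact fun s _ => mem_univ _
    · exact (hVd.continuous.comp Complex.continuous_ofReal).continuousOn
    · intro s hs
      have h : v s ((fun s : ℝ => V s) s) = fderiv ℂ Z (q s) (V s) := by
        simp only [hv]; rw [if_pos (Ioo_subset_Icc_self hs)]
      rw [h]
      exact hasDerivAt_comp_ofReal17 (hV s)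
    · exact fun s _ => mem_univ _
    · simpa using h0
  -- identity theorem
  have hWa : AnalyticOnNhd ℂ W univ := fun z _ => hWd.analyticAt z
  have hVa : AnalyticOnNhd ℂ V univ := fun z _ => hVd.analyticAt z
  have hfreq : ∃ᶠ z in nhdsWithin (0:ℂ) {(0:ℂ)}ᶜ, W z = V z := by
    have hr : Filter.Tendsto (fun n : ℕ => (((n:ℝ)+2)⁻¹ : ℝ)) Filter.atTop (nhds 0) := by
      apply tendsto_inv_atTop_zero.comp
      apply Filter.tendsto_atTop_add_const_right
      exact tendsto_natCast_atTop_atTop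
    have htend : Filter.Tendsto (fun n : ℕ => (((((n:ℝ)+2)⁻¹ : ℝ)) : ℂ)) Filter.atTop
        (nhdsWithin (0:ℂ) {(0:ℂ)}ᶜ) := by
      rw [tendsto_nhdsWithin_iff]
      constructor
      · simpa [Function.comp_def] using (Complex.continuous_ofReal.tendsto 0).comp hr
      · apply Filter.Eventually.of_forall
        intro n
        simp only [mem_compl_iff, mem_singleton_iff]
        intro hcon
        rw [Complex.ofReal_eq_zero] at hcon
        have : (0:ℝ) < ((n:ℝ)+2)⁻¹ := by positivity
        linarith [this.ne' hcon]
    refine htend.frequently (Filter.Frequently.of_forall fun n => ?_)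
    have hmem : ((((n:ℝ)+2)⁻¹ : ℝ)) ∈ Icc (-1:ℝ) 1 := by
      have h2 : (0:ℝ) < ((n:ℝ)+2)⁻¹ := by positivity
      constructor
      · linarith
      · rw [inv_le_one_iff₀]; right; linarith [Nat.cast_nonneg (α := ℝ) n]
    exact heqR hmem
  have := hWa.eq_of_frequently_eq hVa hfreq
  exact congrFun this t₀



theorem stmt17 (Z Y : ℂ × ℂ → ℂ × ℂ) (T : ℂ × ℂ → ℂ) (δ : ℂ)
    (ψ : (ℂ × ℂ) × ℂ → ℂ × ℂ)
    (hZ : Differentiable ℂ Z) (hY : Differentiable ℂ Y) (hT : Differentiable ℂ T)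
    (hψ : Differentiable ℂ ψ)
    -- ψ is the flow of Z :
    (hψ0 : ∀ p, ψ (p, 0) = p)
    (hflow : ∀ p t, HasDerivAt (fun s => ψ (p, s)) (Z (ψ (p, t))) t)
    -- [Z,Y] = δ·Y :
    (hbrk : ∀ p, brkA Z Y p = δ • Y p)
    (hT0 : T 0 = 0) (hT1 : lieDA Z T 0 ≠ -1)
    (p : ℂ × ℂ) (hp : 1 + lieDA Z T p ≠ 0)
    -- Z ⋔ Y at p :
    (htr : (Z p).1 * (Y p).2 - (Z p).2 * (Y p).1 ≠ 0) :
    -- 𝒯*Z = Z/(1+Z·T) :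
    fderiv ℂ (fun q => ψ (q, T q)) p ((1 + lieDA Z T p)⁻¹ • Z p)
      = Z (ψ (p, T p)) ∧
    -- 𝒯*Y = e^{δT}(Y − (Y·T)·𝒯*Z) :
    fderiv ℂ (fun q => ψ (q, T q)) p
        (Complex.exp (δ * T p) •
          (Y p - lieDA Y T p • ((1 + lieDA Z T p)⁻¹ • Z p)))
      = Y (ψ (p, T p)) := by
  classical
  have hq : Continuous (fun t => ψ (p, t)) :=
    hψ.continuous.comp (continuous_const.prodMk continuous_id)
  set q : ℂ → ℂ × ℂ := fun t => ψ (p, t) with hqdef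
  set t₀ : ℂ := T p with ht₀def
  -- variation field along direction u
  have hWmain : ∀ u : ℂ × ℂ, ∀ t,
      HasDerivAt (fun s => deriv (fun z : ℂ => ψ (p + z • u, s)) 0)
        (fderiv ℂ Z (q t) (deriv (fun z : ℂ => ψ (p + z • u, t)) 0)) t := by
    intro u t
    have hinner : Differentiable ℂ (fun r : ℂ × ℂ => ((p + r.1 • u, r.2) : (ℂ × ℂ) × ℂ)) :=
      ((differentiable_const p).add (differentiable_fst.smul_const u)).prodMk differentiable_snd
    have hF : Differentiable ℂ (fun r : ℂ × ℂ => ψ (p + r.1 • u, r.2)) := hψ.comp hinner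
    have hG : Differentiable ℂ (fun r : ℂ × ℂ => Z (ψ (p + r.1 • u, r.2))) := hZ.comp hF
    have h := param_deriv17 (F := fun z s => ψ (p + z • u, s))
      (G := fun z s => Z (ψ (p + z • u, s))) hF hG (fun z s => hflow (p + z • u) s) t
    have hWt : HasDerivAt (fun z : ℂ => ψ (p + z • u, t))
        (deriv (fun z : ℂ => ψ (p + z • u, t)) 0) 0 :=
      ((hF.comp (differentiable_id.prodMk (differentiable_const t))) 0).hasDerivAt
    have hZc : HasDerivAt (fun z : ℂ => Z (ψ (p + z • u, t)))
        (fderiv ℂ Z (ψ (p + (0:ℂ) • u, t)) (deriv (fun z : ℂ => ψ (p + z • u, t)) 0)) 0 :=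
      (hZ (ψ (p + (0:ℂ) • u, t))).hasFDerivAt.comp_hasDerivAt 0 hWt
    rw [hZc.deriv] at h
    have hp0 : p + (0:ℂ) • u = p := by simp
    rw [hp0] at h
    exact h
  -- initial value of the variation field
  have hinit : ∀ u : ℂ × ℂ, deriv (fun z : ℂ => ψ (p + z • u, 0)) 0 = u := by
    intro u
    have he : (fun z : ℂ => ψ (p + z • u, 0)) = fun z : ℂ => p + z • u :=
      funext fun z => hψ0 _
    rw [he]
    have h1 : HasDerivAt (fun z : ℂ => p + z • u) u 0 := by
      simpa using ((hasDerivAt_id (0:ℂ)).smul_const u).const_add p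
    exact h1.deriv
  -- value of the variation field in terms of the fderiv of ψ
  have hval : ∀ (u : ℂ × ℂ) (t : ℂ),
      deriv (fun z : ℂ => ψ (p + z • u, t)) 0 = fderiv ℂ ψ (p, t) (u, 0) := by
    intro u t
    have h1 : HasDerivAt (fun z : ℂ => p + z • u) u 0 := by
      simpa using ((hasDerivAt_id (0:ℂ)).smul_const u).const_add p
    have hi : HasDerivAt (fun z : ℂ => ((p + z • u, t) : (ℂ × ℂ) × ℂ)) ((u, 0)) 0 :=
      h1.prodMk (hasDerivAt_const 0 t)
    have h2 : HasFDerivAt ψ (fderiv ℂ ψ (p, t)) ((fun z : ℂ => ((p + z • u, t) : (ℂ × ℂ) × ℂ)) 0) := by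
      simpa using (hψ (p, t)).hasFDerivAt
    exact (h2.comp_hasDerivAt 0 hi).deriv
  -- statement (A)
  have hA : fderiv ℂ ψ (p, t₀) (Z p, 0) = Z (q t₀) := by
    have hVZ : ∀ t, HasDerivAt (fun t => Z (q t)) (fderiv ℂ Z (q t) (Z (q t))) t := fun t =>
      (hZ (q t)).hasFDerivAt.comp_hasDerivAt t (hflow p t)
    have h0 : deriv (fun z : ℂ => ψ (p + z • Z p, 0)) 0 = Z (q 0) := by
      rw [hinit]
      have : q 0 = p := hψ0 p
      rw [this]
    have := ode_uniq17 hZ hq (hWmain (Z p)) hVZ h0 t₀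
    rw [← hval]
    exact this
  -- statement (B)
  have hB : fderiv ℂ ψ (p, t₀) (Y p, 0) = Complex.exp (-(δ * t₀)) • Y (q t₀) := by
    set VY : ℂ → ℂ × ℂ := fun t => Complex.exp (-(δ * t)) • Y (q t) with hVYdef
    have hVY : ∀ t, HasDerivAt VY (fderiv ℂ Z (q t) (VY t)) t := by
      intro t
      have h1 : HasDerivAt (fun t : ℂ => -(δ * t)) (-δ) t := by
        simpa [Pi.neg_def] using ((hasDerivAt_id t).const_mul δ).neg
      have he : HasDerivAt (fun t : ℂ => Complex.exp (-(δ * t)))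
          (-δ * Complex.exp (-(δ * t))) t := by
        simpa [mul_comm, Function.comp_def] using (Complex.hasDerivAt_exp (-(δ * t))).comp t h1
      have hy : HasDerivAt (fun t => Y (q t)) (fderiv ℂ Y (q t) (Z (q t))) t :=
        (hY (q t)).hasFDerivAt.comp_hasDerivAt t (hflow p t)
      have h := he.smul hy
      have hbr : fderiv ℂ Y (q t) (Z (q t)) = δ • Y (q t) + fderiv ℂ Z (q t) (Y (q t)) := by
        have hb := hbrk (q t)
        simp only [brkA] at hb
        exact sub_eq_iff_eq_add.mp hb
      have key : fderiv ℂ Z (q t) (VY t) =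
          Complex.exp (-(δ * t)) • fderiv ℂ Y (q t) (Z (q t))
            + (-δ * Complex.exp (-(δ * t))) • Y (q t) := by
        rw [hbr]
        have h2 : fderiv ℂ Z (q t) (VY t)
            = Complex.exp (-(δ * t)) • fderiv ℂ Z (q t) (Y (q t)) := by
          simp only [hVYdef]
          exact map_smul _ _ _
        rw [h2]
        module
      rw [key]
      exact h
    have h0 : deriv (fun z : ℂ => ψ (p + z • Y p, 0)) 0 = VY 0 := by
      rw [hinit]
      have hq0 : q 0 = p := hψ0 p
      simp [hVYdef, hq0]
    have := ode_uniq17 hZ hq (hWmain (Y p)) hVY h0 t₀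
    rw [← hval]
    exact this
  -- derivative of 𝒯
  have hTfd : ∀ w : ℂ × ℂ, fderiv ℂ (fun q' => ψ (q', T q')) p w
      = fderiv ℂ ψ (p, t₀) (w, fderiv ℂ T p w) := by
    intro w
    have hGd : HasFDerivAt (fun q' : ℂ × ℂ => ((q', T q') : (ℂ × ℂ) × ℂ))
        ((ContinuousLinearMap.id ℂ (ℂ × ℂ)).prod (fderiv ℂ T p)) p :=
      (hasFDerivAt_id p).prodMk (hT p).hasFDerivAt
    have hcomp : HasFDerivAt (fun q' => ψ (q', T q'))
        ((fderiv ℂ ψ (p, T p)).comp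
          ((ContinuousLinearMap.id ℂ (ℂ × ℂ)).prod (fderiv ℂ T p))) p :=
      ((hψ (p, T p)).hasFDerivAt).comp p hGd
    rw [hcomp.fderiv]
    rfl
  -- splitting of fderiv ψ
  have hsplit : ∀ (w : ℂ × ℂ) (s : ℂ), fderiv ℂ ψ (p, t₀) (w, s)
      = fderiv ℂ ψ (p, t₀) (w, 0) + s • Z (q t₀) := by
    intro w s
    have hz1 : fderiv ℂ ψ (p, t₀) (((0 : ℂ × ℂ), (1:ℂ))) = Z (q t₀) := by
      have hi : HasDerivAt (fun u : ℂ => ((p, u) : (ℂ × ℂ) × ℂ)) (((0:ℂ × ℂ), (1:ℂ))) t₀ :=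
        (hasDerivAt_const t₀ p).prodMk (hasDerivAt_id t₀)
      have h1 : HasDerivAt (fun u : ℂ => ψ (p, u)) (fderiv ℂ ψ (p, t₀) (0, 1)) t₀ :=
        (hψ (p, t₀)).hasFDerivAt.comp_hasDerivAt t₀ hi
      exact h1.unique (hflow p t₀)
    have hws : ((w, s) : (ℂ × ℂ) × ℂ) = (w, 0) + s • ((0:ℂ × ℂ), (1:ℂ)) := by
      simp [Prod.ext_iff]
    rw [hws, map_add, map_smul, hz1]
  have hcz : fderiv ℂ T p (Z p) = lieDA Z T p := rfl
  have hcy : fderiv ℂ T p (Y p) = lieDA Y T p := rfl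
  have hqT : ψ (p, T p) = q t₀ := rfl
  have hTZ : fderiv ℂ (fun q' => ψ (q', T q')) p (Z p)
      = (1 + lieDA Z T p) • Z (q t₀) := by
    rw [hTfd (Z p), hsplit, hA, hcz]
    module
  have hTY : fderiv ℂ (fun q' => ψ (q', T q')) p (Y p)
      = Complex.exp (-(δ * t₀)) • Y (q t₀) + lieDA Y T p • Z (q t₀) := by
    rw [hTfd (Y p), hsplit, hB, hcy]
  have hsc : (1 + lieDA Z T p)⁻¹ • ((1 + lieDA Z T p) • Z (q t₀)) = Z (q t₀) := by
    rw [smul_smul, inv_mul_cancel₀ hp, one_smul]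
  constructor
  · rw [map_smul, hTZ, hsc]
  · rw [map_smul, map_sub, map_smul, map_smul, hTY, hTZ, hsc]
    have hee : Complex.exp (δ * T p) * Complex.exp (-(δ * t₀)) = 1 := by
      rw [← Complex.exp_add, ← ht₀def]
      simp
    calc Complex.exp (δ * T p) •
          (Complex.exp (-(δ * t₀)) • Y (q t₀) + lieDA Y T p • Z (q t₀)
            - lieDA Y T p • Z (q t₀))
        = (Complex.exp (δ * T p) * Complex.exp (-(δ * t₀))) • Y (q t₀) := by
          rw [add_sub_cancel_right, smul_smul]
      _ = Y (q t₀) := by rw [hee, one_smul]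
end
end

section
/- Let Z be a germ of a holomorphic vector field at the origin of ℂ² with zero linear part (Z vanishes to order ≥ 2), and let Y be a meromorphic vector field with [Z,Y] = δY. Then δ = 0. -/
/- Statement 18 (from Lemma degen): if Z is a holomorphic vector field germ vanishing to
order ≥ 2 at the origin (zero linear part) and Y = W/𝔭 is a meromorphic vector field
with [Z,Y] = δY, then δ = 0.
Encoding: germs are power series in ℂ[[x,y]]; Y is W/𝔭 with W a holomorphic vector
field coprime to 𝔭; the relation [Z,Y] = δY is written with denominators cleared:
𝔭·[Z,W] = (δ𝔭 + Z·𝔭)·W. -/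

noncomputable section
open MvPowerSeries

namespace Stmt18Aux

def dg (d : Fin 2 →₀ ℕ) : ℕ := d 0 + d 1

lemma dg_add (a b : Fin 2 →₀ ℕ) : dg (a + b) = dg a + dg b := by
  simp [dg, Finsupp.add_apply]; ring

lemma finsupp_ext2 {a b : Fin 2 →₀ ℕ} (h0 : a 0 = b 0) (h1 : a 1 = b 1) : a = b := by
  ext i; fin_cases i <;> assumption

def IsMin (f : R2) (d : Fin 2 →₀ ℕ) : Prop :=
  MvPowerSeries.coeff d f ≠ 0 ∧
  ∀ e, MvPowerSeries.coeff e f ≠ 0 → dg d < dg e ∨ (dg d = dg e ∧ d 0 ≤ e 0)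

lemma exists_isMin (f : R2) (hf : f ≠ 0) : ∃ d, IsMin f d := by
  classical
  have hex : ∃ d, MvPowerSeries.coeff d f ≠ 0 := by
    by_contra h
    push_neg at h
    exact hf (MvPowerSeries.ext fun d => by rw [h d, map_zero])
  obtain ⟨d0, hd0⟩ := hex
  have hP : ∃ k, ∃ d, dg d = k ∧ MvPowerSeries.coeff d f ≠ 0 := ⟨dg d0, d0, rfl, hd0⟩
  set n := Nat.find hP with hn
  obtain ⟨d1, hd1, hd1'⟩ := Nat.find_spec hP
  have hQ : ∃ a, ∃ d, dg d = n ∧ d 0 = a ∧ MvPowerSeries.coeff d f ≠ 0 :=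
    ⟨d1 0, d1, hd1, rfl, hd1'⟩
  obtain ⟨d, hdn, hda, hdne⟩ := Nat.find_spec hQ
  refine ⟨d, hdne, fun e he => ?_⟩
  have h1 : n ≤ dg e := Nat.find_min' hP ⟨e, rfl, he⟩
  rcases lt_or_ge (dg d) (dg e) with h | h
  · exact Or.inl h
  · have hde : dg e = n := by omega
    have h2 : Nat.find hQ ≤ e 0 := Nat.find_min' hQ ⟨e, hde, rfl, he⟩
    exact Or.inr ⟨by omega, by omega⟩

lemma isMin_le {f : R2} {d : Fin 2 →₀ ℕ} (h : IsMin f d) {e : Fin 2 →₀ ℕ}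
    (he : MvPowerSeries.coeff e f ≠ 0) : dg d ≤ dg e := by
  rcases h.2 e he with h' | h' <;> omega

lemma isMin_low {f : R2} {d : Fin 2 →₀ ℕ} (h : IsMin f d) :
    ∀ e, dg e < dg d → MvPowerSeries.coeff e f = 0 := by
  intro e he
  by_contra h'
  exact absurd (isMin_le h h') (by omega)

lemma coeff_mul_isMin {f g : R2} {df dg' : Fin 2 →₀ ℕ} (hf : IsMin f df) (hg : IsMin g dg') :
    MvPowerSeries.coeff (df + dg') (f * g) =
      MvPowerSeries.coeff df f * MvPowerSeries.coeff dg' g := by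
  rw [MvPowerSeries.coeff_mul]
  rw [Finset.sum_eq_single (df, dg')]
  · intro p hp hne
    rw [Finset.HasAntidiagonal.mem_antidiagonal] at hp
    by_cases h1 : MvPowerSeries.coeff p.1 f = 0
    · rw [h1, zero_mul]
    by_cases h2 : MvPowerSeries.coeff p.2 g = 0
    · rw [h2, mul_zero]
    exfalso
    apply hne
    have e0 : p.1 0 + p.2 0 = df 0 + dg' 0 := by
      have := congrArg (fun x : Fin 2 →₀ ℕ => x 0) hp; simpa using this
    have e1 : p.1 1 + p.2 1 = df 1 + dg' 1 := by
      have := congrArg (fun x : Fin 2 →₀ ℕ => x 1) hp; simpa using this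
    have c1 := hf.2 p.1 h1
    have c2 := hg.2 p.2 h2
    unfold dg at c1 c2
    have : p.1 0 = df 0 ∧ p.1 1 = df 1 ∧ p.2 0 = dg' 0 ∧ p.2 1 = dg' 1 := by omega
    exact Prod.ext (finsupp_ext2 this.1 this.2.1) (finsupp_ext2 this.2.2.1 this.2.2.2)
  · intro h
    exfalso
    exact h (by rw [Finset.HasAntidiagonal.mem_antidiagonal])

lemma coeff_mul_zero {f g : R2} {nf ng : ℕ}
    (hf : ∀ e, dg e < nf → MvPowerSeries.coeff e f = 0)
    (hg : ∀ e, dg e < ng → MvPowerSeries.coeff e g = 0) :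
    ∀ d, dg d < nf + ng → MvPowerSeries.coeff d (f * g) = 0 := by
  intro d hd
  rw [MvPowerSeries.coeff_mul]
  apply Finset.sum_eq_zero
  intro p hp
  rw [Finset.HasAntidiagonal.mem_antidiagonal] at hp
  have hsum : dg p.1 + dg p.2 = dg d := by rw [← dg_add, hp]
  rcases lt_or_ge (dg p.1) nf with h | h
  · rw [hf _ h, zero_mul]
  · rw [hg _ (by omega), mul_zero]

lemma coeff_pd (j : Fin 2) (f : R2) (e : Fin 2 →₀ ℕ) :
    MvPowerSeries.coeff e (pd j f) =
      ((e j : ℂ) + 1) * MvPowerSeries.coeff (e + Finsupp.single j 1) f := by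
  rw [MvPowerSeries.coeff_apply]; rfl

lemma dg_single (j : Fin 2) : dg (Finsupp.single j 1) = 1 := by
  fin_cases j <;> simp [dg]

lemma pd_low {f : R2} {n : ℕ}
    (hf : ∀ e, dg e < n → MvPowerSeries.coeff e f = 0) (j : Fin 2) :
    ∀ e, dg e < n - 1 → MvPowerSeries.coeff e (pd j f) = 0 := by
  intro e he
  rw [coeff_pd, hf, mul_zero]
  rw [dg_add, dg_single]
  omega

end Stmt18Aux

open Stmt18Aux

theorem stmt18 (Z W : Fin 2 → R2) (𝔭 : R2) (δ : ℂ)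
    -- Z vanishes to order ≥ 2 (zero constant and linear parts) :
    (hZ0 : ∀ i, MvPowerSeries.constantCoeff (Z i) = 0)
    (hZ1 : ∀ i j : Fin 2, MvPowerSeries.coeff (Finsupp.single j 1) (Z i) = 0)
    -- Y = W/𝔭 is a nonzero meromorphic vector field, W and 𝔭 coprime :
    (h𝔭 : 𝔭 ≠ 0)
    (hW : ¬ (W 0 = 0 ∧ W 1 = 0))
    (hcop : ∀ f : R2, Irreducible f → f ∣ 𝔭 → ¬ (f ∣ W 0 ∧ f ∣ W 1))
    -- [Z, W/𝔭] = δ·(W/𝔭), denominators cleared :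
    (hbrk : ∀ i, 𝔭 * brk Z W i
      = (MvPowerSeries.C δ * 𝔭 + lieD Z 𝔭) * W i) :
    δ = 0 := by
  classical
  -- low degree vanishing of Z
  have hZlow : ∀ j e, dg e < 2 → MvPowerSeries.coeff e (Z j) = 0 := by
    intro j e he
    have h2 : (e 0 = 0 ∧ e 1 = 0) ∨ (e 0 = 1 ∧ e 1 = 0) ∨ (e 0 = 0 ∧ e 1 = 1) := by
      unfold dg at he; omega
    rcases h2 with h | h | h
    · have : e = 0 := finsupp_ext2 (by simp [h.1]) (by simp [h.2])
      rw [this, MvPowerSeries.coeff_zero_eq_constantCoeff]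
      exact hZ0 j
    · have : e = Finsupp.single 0 1 := finsupp_ext2 (by simp [h.1]) (by simp [h.2])
      rw [this]; exact hZ1 j 0
    · have : e = Finsupp.single 1 1 := finsupp_ext2 (by simp [h.1]) (by simp [h.2])
      rw [this]; exact hZ1 j 1
  obtain ⟨dp, hp⟩ := exists_isMin 𝔭 h𝔭
  -- choose the component of minimal degree
  obtain ⟨i, dw, hw, hglob⟩ :
      ∃ i dw, IsMin (W i) dw ∧
        ∀ (j : Fin 2) e, MvPowerSeries.coeff e (W j) ≠ 0 → dg dw ≤ dg e := by
    by_cases h0 : W 0 = 0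
    · have h1 : W 1 ≠ 0 := fun h => hW ⟨h0, h⟩
      obtain ⟨d1, hd1⟩ := exists_isMin _ h1
      refine ⟨1, d1, hd1, fun j e he => ?_⟩
      fin_cases j
      · simp [h0] at he
      · exact isMin_le hd1 he
    · obtain ⟨d0, hd0⟩ := exists_isMin _ h0
      by_cases h1 : W 1 = 0
      · refine ⟨0, d0, hd0, fun j e he => ?_⟩
        fin_cases j
        · exact isMin_le hd0 he
        · simp [h1] at he
      · obtain ⟨d1, hd1⟩ := exists_isMin _ h1
        rcases le_total (dg d0) (dg d1) with h | h
        · refine ⟨0, d0, hd0, fun j e he => ?_⟩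
          fin_cases j
          · exact isMin_le hd0 he
          · exact le_trans h (isMin_le hd1 he)
        · refine ⟨1, d1, hd1, fun j e he => ?_⟩
          fin_cases j
          · exact le_trans h (isMin_le hd0 he)
          · exact isMin_le hd1 he
  set n := dg dp with hn
  set m := dg dw with hm
  have hPlow : ∀ e, dg e < n → MvPowerSeries.coeff e 𝔭 = 0 := isMin_low hp
  have hWlow : ∀ (j : Fin 2) e, dg e < m → MvPowerSeries.coeff e (W j) = 0 := by
    intro j e he
    by_contra h
    exact absurd (hglob j e h) (by omega)
  have hd : dg (dp + dw) = n + m := dg_add _ _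
  have key := congrArg (MvPowerSeries.coeff (dp + dw)) (hbrk i)
  -- LHS vanishes
  have L0 : MvPowerSeries.coeff (dp + dw) (𝔭 * brk Z W i) = 0 := by
    unfold brk lieD
    rw [mul_sub, mul_add, mul_add, map_sub, map_add, map_add]
    have t1 : ∀ j : Fin 2, MvPowerSeries.coeff (dp + dw) (𝔭 * (Z j * pd j (W i))) = 0 := by
      intro j
      exact coeff_mul_zero hPlow (coeff_mul_zero (hZlow j) (pd_low (hWlow i) j)) _ (by omega)
    have t2 : ∀ j : Fin 2, MvPowerSeries.coeff (dp + dw) (𝔭 * (W j * pd j (Z i))) = 0 := by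
      intro j
      exact coeff_mul_zero hPlow (coeff_mul_zero (hWlow j) (pd_low (hZlow i) j)) _ (by omega)
    rw [t1 0, t1 1, t2 0, t2 1]
    ring
  -- RHS
  have R0 : MvPowerSeries.coeff (dp + dw) ((MvPowerSeries.C δ * 𝔭 + lieD Z 𝔭) * W i)
      = δ * (MvPowerSeries.coeff dp 𝔭 * MvPowerSeries.coeff dw (W i)) := by
    rw [add_mul, map_add]
    have t3 : MvPowerSeries.coeff (dp + dw) (lieD Z 𝔭 * W i) = 0 := by
      unfold lieD
      rw [add_mul, map_add]
      have t4 : ∀ j : Fin 2, MvPowerSeries.coeff (dp + dw) (Z j * pd j 𝔭 * W i) = 0 := by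
        intro j
        exact coeff_mul_zero (coeff_mul_zero (hZlow j) (pd_low hPlow j)) (hWlow i) _ (by omega)
      rw [t4 0, t4 1, add_zero]
    rw [t3, add_zero, mul_assoc, MvPowerSeries.coeff_C_mul, coeff_mul_isMin hp hw]
  rw [L0, R0] at key
  rcases mul_eq_zero.mp key.symm with h | h
  · exact h
  · exact absurd h (mul_ne_zero hp.1 hw.1)
end
end
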